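/- arXiv:1912.07788 — 4 statements merged into one kernel-verified Lean document; each statement's English description precedes it below -/
import Mathlib

section
/- Let α = (α_k)_{k≥0} be a sequence in the open unit disk 𝔻 and let θ ∈ ℝ. Then for every n ≥ 0: (a) φ_n^*(e^{iθ}) ≠ 0, B_n(e^{iθ}) = e^{iθ} φ_n(e^{iθ})/φ_n^*(e^{iθ}) and |B_n(e^{iθ})| = 1; (b) |φ_{n+1}(e^{iθ})|^{-2} = |φ_n(e^{iθ})|^{-2} · (1 − |α_n|²)/|1 − α_n B_n(e^{iθ})|²; (c) |φ_n(e^{iθ})|^{-2} = ∏_{k=0}^{n−1} P_𝔻(α_k B_k(e^{iθ}), 1). -/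
open Complex Finset

/-- `ρ_k = √(1 − |α_k|²)`. -/
noncomputable def rhoV (α : ℕ → ℂ) (k : ℕ) : ℝ :=
  Real.sqrt (1 - ‖α k‖ ^ 2)

/-- The coupled Szegő recursion for the *normalized* orthogonal polynomials:
`szego α n z = (φ_n(z), φ_n^*(z))` where `φ_0 = φ_0^* = 1`,
`φ_{n+1}(z) = ρ_n⁻¹ (z φ_n(z) − conj(α_n) φ_n^*(z))` and
`φ_{n+1}^*(z) = ρ_n⁻¹ (φ_n^*(z) − α_n z φ_n(z))`. -/
noncomputable def szego (α : ℕ → ℂ) : ℕ → ℂ → ℂ × ℂ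
  | 0, _ => (1, 1)
  | n + 1, z =>
    let p := szego α n z
    (((rhoV α n : ℂ))⁻¹ * (z * p.1 - (starRingEnd ℂ) (α n) * p.2),
      ((rhoV α n : ℂ))⁻¹ * (p.2 - α n * z * p.1))

/-- `φ_n(z; α)`, the `n`-th normalized Szegő polynomial. -/
noncomputable def phiN (α : ℕ → ℂ) (n : ℕ) (z : ℂ) : ℂ := (szego α n z).1

/-- `φ_n^*(z; α)`, the `n`-th reversed normalized Szegő polynomial. -/
noncomputable def phiNStar (α : ℕ → ℂ) (n : ℕ) (z : ℂ) : ℂ := (szego α n z).2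

/-- The Prüfer/Blaschke quantities: `B_0(z) = z`,
`B_{n+1}(z) = z B_n(z) (1 − conj(α_n B_n(z)))/(1 − α_n B_n(z))`. -/
noncomputable def BV (α : ℕ → ℂ) : ℕ → ℂ → ℂ
  | 0, z => z
  | n + 1, z =>
    z * BV α n z *
      ((1 - (starRingEnd ℂ) (α n * BV α n z)) / (1 - α n * BV α n z))

/-- The Poisson kernel of the unit disk at the boundary point `1`:
`P_𝔻(z,1) = (1 − |z|²)/|1 − z|²`. -/
noncomputable def poissonD (z : ℂ) : ℝ :=
  (1 - ‖z‖ ^ 2) / ‖1 - z‖ ^ 2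

lemma szego_aux (α : ℕ → ℂ) (hα : ∀ k, ‖α k‖ < 1) (z : ℂ)
    (hz : ‖z‖ = 1) (n : ℕ) :
    phiNStar α n z ≠ 0 ∧
    ‖BV α n z‖ = 1 ∧
    BV α n z = z * phiN α n z / phiNStar α n z ∧
    ‖phiNStar α n z‖ = ‖phiN α n z‖ ∧
    (‖phiN α n z‖)⁻¹ ^ 2 =
      ∏ k ∈ Finset.range n, poissonD (α k * BV α k z) := by
  induction n with
  | zero =>
    refine ⟨one_ne_zero, hz, by simp [phiN, phiNStar, BV, szego], rfl, by
      simp [phiN, szego]⟩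
  | succ n ih =>
    obtain ⟨hne, hBabs, hB, habs, hprod⟩ := ih
    have hα2 : ‖α n‖ ^ 2 < 1 := by
      nlinarith [hα n, norm_nonneg (α n)]
    have hρpos : 0 < rhoV α n := Real.sqrt_pos.2 (by linarith)
    have hρsq : rhoV α n ^ 2 = 1 - ‖α n‖ ^ 2 :=
      Real.sq_sqrt (by linarith)
    have hρC : ((rhoV α n : ℂ)) ≠ 0 := by exact_mod_cast hρpos.ne'
    have hden : (1 : ℂ) - α n * BV α n z ≠ 0 := by
      intro h
      have h1 : α n * BV α n z = 1 := by linear_combination -h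
      have : ‖α n * BV α n z‖ = 1 := by rw [h1]; simp
      rw [norm_mul, hBabs, mul_one] at this
      exact absurd this (hα n).ne
    have hzphi : z * phiN α n z = BV α n z * phiNStar α n z := by
      rw [hB, div_mul_cancel₀ _ hne]
    have hBc : BV α n z * (starRingEnd ℂ) (BV α n z) = 1 := by
      rw [Complex.mul_conj, Complex.normSq_eq_norm_sq, hBabs]; norm_num
    have hstar1 : phiNStar α (n+1) z =
        (rhoV α n : ℂ)⁻¹ * (phiNStar α n z * (1 - α n * BV α n z)) := by
      simp only [phiNStar, phiN, szego] at hzphi ⊢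
      linear_combination (-(rhoV α n : ℂ)⁻¹ * α n) * hzphi
    have hphi1 : phiN α (n+1) z =
        (rhoV α n : ℂ)⁻¹ * (phiNStar α n z * (BV α n z - (starRingEnd ℂ) (α n))) := by
      simp only [phiNStar, phiN, szego] at hzphi ⊢
      linear_combination (rhoV α n : ℂ)⁻¹ * hzphi
    have hne' : phiNStar α (n+1) z ≠ 0 := by
      rw [hstar1]; exact mul_ne_zero (inv_ne_zero hρC) (mul_ne_zero hne hden)
    have hkey : (1 : ℂ) - α n * BV α n z
        = BV α n z * ((starRingEnd ℂ) (BV α n z) - α n) := by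
      linear_combination -hBc
    have habs_eq : ‖1 - α n * BV α n z‖
        = ‖BV α n z - (starRingEnd ℂ) (α n)‖ := by
      have hcc : BV α n z - (starRingEnd ℂ) (α n)
          = (starRingEnd ℂ) ((starRingEnd ℂ) (BV α n z) - α n) := by
        rw [map_sub, Complex.conj_conj]
      rw [hkey, norm_mul, hBabs, one_mul, hcc, Complex.norm_conj]
    have habs' : ‖phiNStar α (n+1) z‖ = ‖phiN α (n+1) z‖ := by
      rw [hstar1, hphi1, norm_mul, norm_mul, norm_mul, norm_mul, habs_eq]
    have hBrec : BV α (n+1) z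
        = z * (BV α n z - (starRingEnd ℂ) (α n)) / (1 - α n * BV α n z) := by
      simp only [BV, map_mul]
      have hden2 : 1 - BV α n z * α n ≠ 0 := by rwa [mul_comm]
      field_simp
      linear_combination (-(z * (starRingEnd ℂ) (α n))) * hBc
    have hB' : BV α (n+1) z = z * phiN α (n+1) z / phiNStar α (n+1) z := by
      rw [hBrec, hphi1, hstar1]
      field_simp
    have hdenabs : ‖1 - α n * BV α n z‖ ≠ 0 := norm_ne_zero_iff.mpr hden
    have hBabs' : ‖BV α (n+1) z‖ = 1 := by
      rw [hBrec, norm_div, norm_mul, hz, one_mul, ← habs_eq]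
      exact div_self hdenabs
    have hφne : ‖phiN α n z‖ ≠ 0 := by
      rw [← habs]; exact norm_ne_zero_iff.mpr hne
    have hstep : ‖phiN α (n+1) z‖ =
        (rhoV α n)⁻¹ * (‖phiN α n z‖ * ‖1 - α n * BV α n z‖) := by
      rw [← habs', hstar1, norm_mul, norm_mul, norm_inv, Complex.norm_real, Real.norm_eq_abs,
        abs_of_pos hρpos, habs]
    have hpoisson : poissonD (α n * BV α n z)
        = (1 - ‖α n‖ ^ 2) / ‖1 - α n * BV α n z‖ ^ 2 := by
      unfold poissonD
      rw [norm_mul, hBabs, mul_one]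
    refine ⟨hne', hBabs', hB', habs', ?_⟩
    rw [Finset.prod_range_succ, ← hprod, hstep, hpoisson]
    rw [mul_inv, mul_inv, inv_inv, mul_pow, mul_pow, hρsq]
    field_simp

/-- For any sequence `α` in the open unit disk and `θ ∈ ℝ`, for every `n`:
(a) `φ_n^*(e^{iθ}) ≠ 0`, `B_n(e^{iθ}) = e^{iθ} φ_n(e^{iθ})/φ_n^*(e^{iθ})` and `|B_n(e^{iθ})| = 1`;
(b) `|φ_{n+1}(e^{iθ})|⁻² = |φ_n(e^{iθ})|⁻² (1 − |α_n|²)/|1 − α_n B_n(e^{iθ})|²`;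
(c) `|φ_n(e^{iθ})|⁻² = ∏_{k<n} P_𝔻(α_k B_k(e^{iθ}), 1)`. -/
theorem prufer_poisson_identities (α : ℕ → ℂ) (hα : ∀ k, ‖α k‖ < 1)
    (θ : ℝ) (n : ℕ) :
    (phiNStar α n (Complex.exp (θ * Complex.I)) ≠ 0 ∧
      BV α n (Complex.exp (θ * Complex.I)) =
        Complex.exp (θ * Complex.I) * phiN α n (Complex.exp (θ * Complex.I)) /
          phiNStar α n (Complex.exp (θ * Complex.I)) ∧
      ‖BV α n (Complex.exp (θ * Complex.I))‖ = 1) ∧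
    (‖phiN α (n + 1) (Complex.exp (θ * Complex.I))‖)⁻¹ ^ 2 =
      (‖phiN α n (Complex.exp (θ * Complex.I))‖)⁻¹ ^ 2 *
        ((1 - ‖α n‖ ^ 2) /
          ‖1 - α n * BV α n (Complex.exp (θ * Complex.I))‖ ^ 2) ∧
    (‖phiN α n (Complex.exp (θ * Complex.I))‖)⁻¹ ^ 2 =
      ∏ k ∈ Finset.range n, poissonD (α k * BV α k (Complex.exp (θ * Complex.I))) := by
  set z := Complex.exp (↑θ * Complex.I) with hzdef
  have hz : ‖z‖ = 1 := Complex.norm_exp_ofReal_mul_I θ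
  obtain ⟨hne, hBabs, hB, habs, hprod⟩ := szego_aux α hα z hz n
  obtain ⟨hne', hBabs', hB', habs', hprod'⟩ := szego_aux α hα z hz (n + 1)
  refine ⟨⟨hne, hB, hBabs⟩, ?_, hprod⟩
  rw [hprod', hprod, Finset.prod_range_succ]
  congr 1
  unfold poissonD
  rw [norm_mul, hBabs, mul_one]
end

section
/- Let α = (α_k)_{k≥0} be a sequence in the open unit disk 𝔻, let γ_k = α_k B_k(1) be the modified Verblunsky coefficients, and define (X_n), (Y_n) by the stated recursion. Then for every n ≥ 1: Y_{n−1} = |φ_n(1)|^{-2} = ∏_{k=0}^{n−1} P_𝔻(γ_k, 1), and |ψ_n(1)/φ_n(1)|² = X_{n−1}² + Y_{n−1}²; in particular |ψ_n(1)|^{-2} = Y_{n−1}/(X_{n−1}² + Y_{n−1}²). -/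
open Complex Finset

/-- `ψ_n(z; α)`, the `n`-th second kind polynomial: same recursion with `α` replaced by `−α`. -/
noncomputable def psiN (α : ℕ → ℂ) (n : ℕ) (z : ℂ) : ℂ := phiN (fun k => -(α k)) n z

/-- The modified Verblunsky coefficients `γ_k = α_k B_k(1)`. -/
noncomputable def gammaV (α : ℕ → ℂ) (k : ℕ) : ℂ := α k * BV α k 1

/-- The recursion `X_{-1} = 0`, `Y_{-1} = 1`,
`X_n = X_{n-1} + 2 Y_{n-1} Im(γ_n/(1−γ_n))`, `Y_n = Y_{n-1} (1 + 2 Re(γ_n/(1−γ_n)))`: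
`XY γ (n+1) = (X_n, Y_n)` and `XY γ 0 = (X_{-1}, Y_{-1})`. -/
noncomputable def XY (γ : ℕ → ℂ) : ℕ → ℝ × ℝ
  | 0 => (0, 1)
  | n + 1 =>
    let p := XY γ n
    (p.1 + 2 * p.2 * (γ n / (1 - γ n)).im, p.2 * (1 + 2 * (γ n / (1 - γ n)).re))

lemma rhoV_neg (α : ℕ → ℂ) : rhoV (fun k => -(α k)) = rhoV α := by
  funext k; simp [rhoV]

lemma rhoV_pos (α : ℕ → ℂ) (hα : ∀ k, ‖α k‖ < 1) (k : ℕ) : 0 < rhoV α k := by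
  have h := hα k
  have : (0:ℝ) < 1 - ‖α k‖ ^ 2 := by nlinarith [norm_nonneg (α k)]
  exact Real.sqrt_pos.mpr this

lemma rhoV_sq (α : ℕ → ℂ) (hα : ∀ k, ‖α k‖ < 1) (k : ℕ) :
    (rhoV α k) ^ 2 = 1 - Complex.normSq (α k) := by
  rw [rhoV, Real.sq_sqrt, Complex.sq_norm]
  nlinarith [norm_nonneg (α k), hα k]

set_option maxHeartbeats 1600000 in
lemma main_inv (α : ℕ → ℂ) (hα : ∀ k, ‖α k‖ < 1) (n : ℕ) :
    BV α n 1 * (starRingEnd ℂ) (BV α n 1) = 1 ∧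
    phiN α n 1 = BV α n 1 * phiNStar α n 1 ∧
    0 < (XY (gammaV α) n).2 ∧
    Complex.normSq (phiNStar α n 1) * (XY (gammaV α) n).2 = 1 ∧
    (XY (gammaV α) n).2 = ∏ k ∈ Finset.range n, poissonD (gammaV α k) ∧
    phiNStar (fun k => -(α k)) n 1 =
      (((XY (gammaV α) n).2 : ℂ) + Complex.I * ((XY (gammaV α) n).1 : ℂ)) * phiNStar α n 1 ∧
    psiN α n 1 =
      (((XY (gammaV α) n).2 : ℂ) - Complex.I * ((XY (gammaV α) n).1 : ℂ))
        * (BV α n 1 * phiNStar α n 1) := by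
  induction n with
  | zero =>
      simp [phiN, phiNStar, psiN, szego, BV, XY, Complex.normSq]
  | succ n ih =>
      obtain ⟨hb, hphi, hYpos, hnorm, hprod, hws, hv⟩ := ih
      set b := BV α n 1 with hbdef
      set u := phiNStar α n 1 with hudef
      set X := (XY (gammaV α) n).1 with hXdef
      set Y := (XY (gammaV α) n).2 with hYdef
      set γ := gammaV α n with hgdef
      -- basic facts
      have hnb : Complex.normSq b = 1 := by
        have := Complex.mul_conj b
        rw [hb] at this
        exact_mod_cast this.symm
      have hbne : b ≠ 0 := by
        intro h; rw [h] at hnb; simp at hnb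
      have hnγ : Complex.normSq γ = Complex.normSq (α n) := by
        rw [hgdef, gammaV, Complex.normSq_mul, ← hbdef, hnb, mul_one]
      have hγlt : Complex.normSq γ < 1 := by
        rw [hnγ, ← Complex.sq_norm]
        nlinarith [norm_nonneg (α n), hα n]
      have hγne : (1:ℂ) - γ ≠ 0 := by
        intro h
        have : γ = 1 := by linear_combination -h
        rw [this] at hγlt; simp at hγlt
      have hγcne : (1:ℂ) - (starRingEnd ℂ) γ ≠ 0 := by
        intro h
        apply hγne
        have := congrArg (starRingEnd ℂ) h
        simpa using this
      have hρpos := rhoV_pos α hα n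
      have hρne : ((rhoV α n : ℝ) : ℂ) ≠ 0 := by
        exact_mod_cast ne_of_gt hρpos
      have hρsq : ((rhoV α n : ℝ) : ℂ)^2 = 1 - Complex.normSq γ := by
        rw [← Complex.ofReal_pow, rhoV_sq α hα n, hnγ]; push_cast; ring
      -- γ = α n * b, and conj α n = conj γ * b
      have hγab : γ = α n * b := by rw [hgdef, gammaV, ← hbdef]
      have hconjα : (starRingEnd ℂ) (α n) = (starRingEnd ℂ) γ * b := by
        have : (starRingEnd ℂ) γ = (starRingEnd ℂ) (α n) * (starRingEnd ℂ) b := by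
          rw [hγab, map_mul]
        rw [this, mul_assoc]
        nth_rewrite 1 [← mul_one ((starRingEnd ℂ) (α n))]
        congr 1
        rw [mul_comm] at hb
        exact hb.symm
      have hune : u ≠ 0 := by
        intro h
        rw [h] at hnorm
        simp at hnorm
      -- new values
      have hXY' : XY (gammaV α) (n+1) =
          (X + 2*Y*(γ/(1-γ)).im, Y*(1+2*(γ/(1-γ)).re)) := by
        rw [XY, ← hXdef, ← hYdef, ← hgdef]
      have hB' : BV α (n+1) 1 = b * ((1 - (starRingEnd ℂ) γ)/(1 - γ)) := by
        rw [BV, ← hbdef, ← hγab, one_mul]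
      -- complex-coded re/im
      have hre : ((2*(γ/(1-γ)).re : ℝ) : ℂ) = γ/(1-γ) + (starRingEnd ℂ) (γ/(1-γ)) := by
        rw [Complex.add_conj]
      have him : ((2*(γ/(1-γ)).im : ℝ) : ℂ) * Complex.I
          = γ/(1-γ) - (starRingEnd ℂ) (γ/(1-γ)) := by
        rw [Complex.sub_conj]
      have hconjg : (starRingEnd ℂ) (γ/(1-γ)) = (starRingEnd ℂ) γ / (1 - (starRingEnd ℂ) γ) := by
        rw [map_div₀, map_sub, map_one]
      set c := (starRingEnd ℂ) γ with hcdef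
      set X' := X + 2*Y*(γ/(1-γ)).im with hX'def
      set Y' := Y*(1+2*(γ/(1-γ)).re) with hY'def
      have h1 : ((2*(γ/(1-γ)).re : ℝ) : ℂ) = γ/(1-γ) + c/(1-c) := by
        rw [hre, hconjg]
      have h2 : ((2*(γ/(1-γ)).im : ℝ) : ℂ) * Complex.I = γ/(1-γ) - c/(1-c) := by
        rw [him, hconjg]
      push_cast at h1 h2
      have htA : ((Y':ℂ) + Complex.I*X') = (Y:ℂ) + Complex.I*X + 2*Y*(γ/(1-γ)) := by
        rw [hY'def, hX'def]
        push_cast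
        linear_combination (Y:ℂ) * h1 + (Y:ℂ) * h2
      have htB : ((Y':ℂ) - Complex.I*X') = (Y:ℂ) - Complex.I*X + 2*Y*(c/(1-c)) := by
        rw [hY'def, hX'def]
        push_cast
        linear_combination (Y:ℂ) * h1 - (Y:ℂ) * h2
      -- key identities
      have keyA : ((Y:ℂ) + Complex.I*X) + γ * ((Y:ℂ) - Complex.I*X)
          = ((Y':ℂ) + Complex.I*X') * (1 - γ) := by
        rw [htA]; field_simp; ring
      have keyB : ((Y:ℂ) - Complex.I*X) + c * ((Y:ℂ) + Complex.I*X)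
          = ((Y':ℂ) - Complex.I*X') * (1 - c) := by
        rw [htB]; field_simp; ring
      have hX1 : (XY (gammaV α) (n+1)).1 = X' := by rw [hXY']
      have hY1 : (XY (gammaV α) (n+1)).2 = Y' := by rw [hXY']
      have hρn : rhoV (fun k => -(α k)) n = rhoV α n := congrFun (rhoV_neg α) n
      -- recursion unfoldings
      have hu' : phiNStar α (n+1) 1
          = (↑(rhoV α n))⁻¹ * (u - α n * 1 * phiN α n 1) := rfl
      have ha' : phiN α (n+1) 1
          = (↑(rhoV α n))⁻¹ * (1 * phiN α n 1 - (starRingEnd ℂ) (α n) * u) := rfl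
      have hw' : phiNStar (fun k => -(α k)) (n+1) 1
          = (↑(rhoV (fun k => -(α k)) n))⁻¹ *
            (phiNStar (fun k => -(α k)) n 1 - (-(α n)) * 1 * psiN α n 1) := rfl
      have hv' : psiN α (n+1) 1
          = (↑(rhoV (fun k => -(α k)) n))⁻¹ *
            (1 * psiN α n 1 - (starRingEnd ℂ) (-(α n)) * phiNStar (fun k => -(α k)) n 1) := rfl
      have hu'' : phiNStar α (n+1) 1 = (↑(rhoV α n))⁻¹ * ((1-γ) * u) := by
        rw [hu', hphi]
        linear_combination (↑(rhoV α n))⁻¹ * u * hγab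
      -- real Poisson identity
      have hmc : ((Complex.normSq (1-γ) : ℝ) : ℂ) = (1-γ)*(1-c) := by
        rw [← Complex.mul_conj]; simp [hcdef]
      have hmc2 : ((Complex.normSq γ : ℝ) : ℂ) = γ * c := (Complex.mul_conj γ).symm
      have hpo : Complex.normSq (1-γ) * (1+2*(γ/(1-γ)).re) = 1 - Complex.normSq γ := by
        have : ((Complex.normSq (1-γ) * (1+2*(γ/(1-γ)).re) : ℝ) : ℂ)
            = ((1 - Complex.normSq γ : ℝ) : ℂ) := by
          push_cast
          rw [hmc, hmc2]  -- may need cast forms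
          rw [h1]
          field_simp
          ring
        exact_mod_cast this
      have hns1γ : 0 < Complex.normSq (1-γ) := by
        have := Complex.normSq_pos.mpr hγne
        exact this
      have hρ2 : (rhoV α n)^2 = 1 - Complex.normSq γ := by
        rw [rhoV_sq α hα n, hnγ]
      have hre_pos : 0 < 1 + 2*(γ/(1-γ)).re := by
        have h := hpo
        nlinarith [hγlt, hns1γ]
      have hpoiss : poissonD γ = 1 + 2*(γ/(1-γ)).re := by
        rw [poissonD, Complex.sq_norm, Complex.sq_norm, div_eq_iff (ne_of_gt hns1γ)]
        linarith [hpo]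
      refine ⟨?_, ?_, ?_, ?_, ?_, ?_, ?_⟩
      · -- |B|=1
        have hBc : (starRingEnd ℂ) (BV α (n+1) 1) = (starRingEnd ℂ) b * ((1-γ)/(1-c)) := by
          simp only [hB', map_mul, map_div₀, map_sub, map_one, hcdef, Complex.conj_conj]
        rw [hBc, hB']
        field_simp
        linear_combination hb
      · -- phi = B phi*
        rw [ha', hB', hu'', hphi, hconjα]
        field_simp
      · -- Y' > 0
        rw [hY1, hY'def]
        exact mul_pos hYpos hre_pos
      · -- normSq * Y = 1
        rw [hY1, hY'def, hu'', Complex.normSq_mul, Complex.normSq_mul, Complex.normSq_inv,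
          Complex.normSq_ofReal]
        have hρ2' : (rhoV α n) * (rhoV α n) = 1 - Complex.normSq γ := by
          nlinarith [hρ2]
        rw [hρ2']
        have hne : (1:ℝ) - Complex.normSq γ ≠ 0 := by nlinarith [hγlt]
        field_simp
        nlinarith [hpo, hnorm]
      · -- product
        rw [hY1, hY'def, Finset.prod_range_succ, ← hprod, ← hgdef, hpoiss]
      · -- psi* invariant
        rw [hw', hρn, hws, hv, hu'', hX1, hY1]
        push_cast
        linear_combination (↑(rhoV α n))⁻¹ * u * keyA
          - (↑(rhoV α n))⁻¹ * ((Y:ℂ) - Complex.I*X) * u * hγab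
      · -- psi invariant
        have hcancel : b*((1-c)/(1-γ)) * ((↑(rhoV α n))⁻¹*((1-γ)*u))
            = (↑(rhoV α n))⁻¹ * (b*(1-c)*u) := by
          field_simp
        rw [hv', hρn, hv, hws, hB', hu'', hX1, hY1, map_neg, hconjα, hcancel]
        linear_combination (↑(rhoV α n))⁻¹ * u * b * keyB
/-- With `γ_k = α_k B_k(1)` and `(X_n, Y_n)` defined by the stated recursion,
for every `n ≥ 1`: `Y_{n−1} = |φ_n(1)|⁻² = ∏_{k<n} P_𝔻(γ_k, 1)`,
`|ψ_n(1)/φ_n(1)|² = X_{n−1}² + Y_{n−1}²`, and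
`|ψ_n(1)|⁻² = Y_{n−1}/(X_{n−1}² + Y_{n−1}²)`. -/
theorem second_kind_XY (α : ℕ → ℂ) (hα : ∀ k, ‖α k‖ < 1) (n : ℕ) (hn : 1 ≤ n) :
    (XY (gammaV α) n).2 = (‖phiN α n 1‖)⁻¹ ^ 2 ∧
    (XY (gammaV α) n).2 = ∏ k ∈ Finset.range n, poissonD (gammaV α k) ∧
    ‖psiN α n 1 / phiN α n 1‖ ^ 2 =
      (XY (gammaV α) n).1 ^ 2 + (XY (gammaV α) n).2 ^ 2 ∧
    (‖psiN α n 1‖)⁻¹ ^ 2 =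
      (XY (gammaV α) n).2 / ((XY (gammaV α) n).1 ^ 2 + (XY (gammaV α) n).2 ^ 2) := by
  obtain ⟨hb, hphi, hYpos, hnorm, hprod, hws, hv⟩ := main_inv α hα n
  set b := BV α n 1 with hbdef
  set u := phiNStar α n 1 with hudef
  set X := (XY (gammaV α) n).1 with hXdef
  set Y := (XY (gammaV α) n).2 with hYdef
  have hnb : Complex.normSq b = 1 := by
    have := Complex.mul_conj b
    rw [hb] at this
    exact_mod_cast this.symm
  have hbne : b ≠ 0 := by intro h; rw [h] at hnb; simp at hnb
  have hnu : Complex.normSq u ≠ 0 := by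
    intro h
    rw [h] at hnorm; simp at hnorm
  have hune : u ≠ 0 := fun h => hnu (by rw [h]; simp)
  have hnupos : 0 < Complex.normSq u := Complex.normSq_pos.mpr hune
  have hYinv : Y = (Complex.normSq u)⁻¹ := by
    field_simp
    linarith [hnorm]
  have habsphi : ‖phiN α n 1‖ ^ 2 = Complex.normSq u := by
    rw [Complex.sq_norm, hphi, Complex.normSq_mul, hnb, one_mul]
  have hnt : Complex.normSq ((Y:ℂ) - Complex.I * X) = X^2 + Y^2 := by
    simp [Complex.normSq_apply]
    ring
  have hXY2pos : 0 < X^2 + Y^2 := by nlinarith [hYpos, sq_nonneg X]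
  refine ⟨?_, hprod, ?_, ?_⟩
  · rw [inv_pow, habsphi, hYinv]
  · have hq : psiN α n 1 / phiN α n 1 = (Y:ℂ) - Complex.I * X := by
      rw [hv, hphi]
      field_simp
    rw [hq, Complex.sq_norm, hnt]
  · rw [inv_pow, Complex.sq_norm, hv, Complex.normSq_mul, Complex.normSq_mul, hnb, hnt,
      hYinv]
    field_simp
end

section
/- Under the measure 𝐏 = dQ(α) dθ/2π on 𝔻^∞ × [0, 2π), the process n ↦ |φ_n(e^{iθ})|^{-2} is a martingale with respect to the filtration G_n = σ(θ, α_0, α_1, …, α_{n−1}); that is, |φ_n(e^{iθ})|^{-2} is G_n-measurable, integrable, and E_𝐏[ |φ_{n+1}(e^{iθ})|^{-2} | G_n ] = |φ_n(e^{iθ})|^{-2} almost surely. -/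
open Complex Finset

open MeasureTheory ProbabilityTheory Filter

/-! ### Auxiliary lemmas -/

section Aux

@[fun_prop] lemma measurable_cabs : Measurable (fun z : ℂ => ‖z‖) :=
  continuous_norm.measurable
@[fun_prop] lemma continuous_cabs : Continuous (fun z : ℂ => ‖z‖) :=
  continuous_norm
@[fun_prop] lemma measurable_sqrt' : Measurable Real.sqrt :=
  Real.continuous_sqrt.measurable
@[fun_prop] lemma measurable_conj' : Measurable (fun z : ℂ => (starRingEnd ℂ) z) :=
  Complex.continuous_conj.measurable
@[fun_prop] lemma measurable_ofReal' : Measurable (fun r : ℝ => (r : ℂ)) :=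
  Complex.continuous_ofReal.measurable
@[fun_prop] lemma measurable_cexp : Measurable Complex.exp :=
  Complex.continuous_exp.measurable
@[fun_prop] lemma measurable_rhoV (n : ℕ) : Measurable fun α : ℕ → ℂ => rhoV α n := by
  unfold rhoV; fun_prop
@[fun_prop] lemma measurable_poissonD : Measurable poissonD := by
  unfold poissonD; fun_prop

lemma szego_congr {α β : ℕ → ℂ} {n : ℕ} (h : ∀ k < n, α k = β k) (z : ℂ) :
    szego α n z = szego β n z := by
  induction n with
  | zero => rfl
  | succ n ih =>
    have h1 : ∀ k < n, α k = β k := fun k hk => h k (hk.trans (Nat.lt_succ_self n))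
    have h2 : α n = β n := h n (Nat.lt_succ_self n)
    simp only [szego, ih h1, rhoV, h2]

@[fun_prop] lemma measurable_szego (n : ℕ) :
    Measurable (fun p : (ℕ → ℂ) × ℂ => szego p.1 n p.2) := by
  induction n with
  | zero => exact measurable_const
  | succ n ih =>
    have h1 : Measurable (fun p : (ℕ → ℂ) × ℂ => (szego p.1 n p.2).1) := ih.fst
    have h2 : Measurable (fun p : (ℕ → ℂ) × ℂ => (szego p.1 n p.2).2) := ih.snd
    simp only [szego]
    exact Measurable.prod (by fun_prop) (by fun_prop)

@[fun_prop] lemma measurable_phiN (n : ℕ) :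
    Measurable (fun p : (ℕ → ℂ) × ℂ => phiN p.1 n p.2) := (measurable_szego n).fst

@[fun_prop] lemma measurable_phiNStar (n : ℕ) :
    Measurable (fun p : (ℕ → ℂ) × ℂ => phiNStar p.1 n p.2) := (measurable_szego n).snd

lemma phiNStar_eq (α : ℕ → ℂ) (n : ℕ) {z : ℂ} (hz : ‖z‖ = 1) :
    phiNStar α n z = z ^ n * (starRingEnd ℂ) (phiN α n z) := by
  have hz0 : z ≠ 0 := by
    intro h; rw [h] at hz; simp at hz
  have hzz : (starRingEnd ℂ) z = z⁻¹ := by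
    rw [Complex.inv_def]
    have : Complex.normSq z = 1 := by
      rw [Complex.normSq_eq_norm_sq, hz]; norm_num
    simp [this]
  induction n with
  | zero => simp [phiN, phiNStar, szego]
  | succ n ih =>
    simp only [phiN, phiNStar, szego] at ih ⊢
    rw [ih]
    simp only [map_mul, map_sub, map_inv₀, Complex.conj_conj, Complex.conj_ofReal, map_pow, hzz]
    have hw : z * z⁻¹ = 1 := mul_inv_cancel₀ hz0
    have hwn : z ^ n * (z⁻¹) ^ n = 1 := by rw [← mul_pow, hw, one_pow]
    linear_combination (-(((rhoV α n : ℂ))⁻¹ * (starRingEnd ℂ) (szego α n z).1 * z ^ n)) * hw +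
      (((rhoV α n : ℂ))⁻¹ * α n * (szego α n z).1 * z) * hwn

lemma abs_phiNStar (α : ℕ → ℂ) (n : ℕ) {z : ℂ} (hz : ‖z‖ = 1) :
    ‖phiNStar α n z‖ = ‖phiN α n z‖ := by
  rw [phiNStar_eq α n hz, norm_mul, norm_pow, hz, one_pow, one_mul, Complex.norm_conj]

lemma poissonD_zero : poissonD 0 = 1 := by simp [poissonD]

lemma poissonD_conj (z : ℂ) : poissonD ((starRingEnd ℂ) z) = poissonD z := by
  unfold poissonD
  rw [Complex.norm_conj, ← Complex.norm_conj (1 - (starRingEnd ℂ) z), map_sub, map_one,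
    Complex.conj_conj]

lemma poissonD_nonneg {z : ℂ} (hz : ‖z‖ ≤ 1) : 0 ≤ poissonD z := by
  apply div_nonneg
  · nlinarith [norm_nonneg z]
  · positivity

lemma one_sub_ne {w : ℂ} (hw : ‖w‖ < 1) : 1 - w ≠ 0 := by
  intro h
  have : w = 1 := by linear_combination -h
  rw [this] at hw; simp at hw

/-- The key one-step identity. -/
lemma f_succ_eq (α : ℕ → ℂ) (n : ℕ) {z : ℂ} (hz : ‖z‖ = 1)
    (hα : ‖α n‖ < 1) :
    (‖phiN α (n + 1) z‖)⁻¹ ^ 2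
      = (‖phiN α n z‖)⁻¹ ^ 2 *
        poissonD ((starRingEnd ℂ) (α n) * (phiNStar α n z / (z * phiN α n z))) := by
  have hz0 : z ≠ 0 := fun h => by rw [h] at hz; simp at hz
  have hρpos : 0 < rhoV α n := Real.sqrt_pos.mpr (by nlinarith [norm_nonneg (α n)])
  have hρsq : rhoV α n ^ 2 = 1 - ‖α n‖ ^ 2 :=
    Real.sq_sqrt (by nlinarith [norm_nonneg (α n)])
  have hstar := abs_phiNStar α n hz
  by_cases hφ : phiN α n z = 0
  · have hφs : phiNStar α n z = 0 := by
      rw [← norm_eq_zero] at hφ ⊢; rw [hstar, hφ]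
    have : phiN α (n + 1) z = 0 := by
      show (szego α (n + 1) z).1 = 0
      simp only [szego]
      rw [show (szego α n z).1 = 0 from hφ, show (szego α n z).2 = 0 from hφs]
      ring
    rw [this, hφ, hφs]
    simp [poissonD_zero]
  · set w : ℂ := (starRingEnd ℂ) (α n) * (phiNStar α n z / (z * phiN α n z)) with hw
    have habsw : ‖w‖ = ‖α n‖ := by
      rw [hw, norm_mul, Complex.norm_conj, norm_div, hstar, norm_mul, hz, one_mul,
        div_self (by simpa using hφ), mul_one]
    have hw1 : ‖w‖ < 1 := habsw ▸ hα
    have h1w : (1 : ℂ) - w ≠ 0 := one_sub_ne hw1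
    have hφ1 : (szego α n z).1 ≠ 0 := hφ
    have hkey : phiN α (n + 1) z = ((rhoV α n : ℂ))⁻¹ * (z * phiN α n z) * (1 - w) := by
      show (szego α (n+1) z).1 = _
      simp only [szego, hw, phiN, phiNStar]
      field_simp
    rw [hkey]
    rw [norm_mul, norm_mul, norm_inv, norm_mul, Complex.norm_real, Real.norm_eq_abs, abs_of_pos hρpos, hz, one_mul]
    unfold poissonD
    rw [habsw]
    have hφne : ‖phiN α n z‖ ≠ 0 := norm_ne_zero_iff.mpr hφ
    have h1wne : ‖1 - w‖ ≠ 0 := norm_ne_zero_iff.mpr h1w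
    field_simp
    rw [← hρsq]

/-! ### The Poisson integral -/

lemma abs_unit_exp (u : ℂ) (t : ℝ) :
    ‖u * Complex.exp (t * Complex.I)‖ = ‖u‖ := by
  rw [norm_mul, Complex.norm_exp]
  simp

lemma poissonD_re {w : ℂ} (hw : ‖w‖ < 1) :
    poissonD w = (-1 + 2 * (1 - w)⁻¹).re := by
  have h1 : (1 : ℂ) - w ≠ 0 := one_sub_ne hw
  have hN : Complex.normSq (1 - w) ≠ 0 := by
    simpa [Complex.normSq_eq_zero] using h1
  have hNpos : 0 < Complex.normSq (1 - w) := Complex.normSq_pos.mpr h1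
  unfold poissonD
  rw [Complex.sq_norm, Complex.sq_norm]
  simp only [Complex.add_re, Complex.neg_re, Complex.one_re, Complex.mul_re, Complex.inv_re,
    Complex.inv_im, Complex.ofReal_re, Complex.re_ofNat, Complex.im_ofNat]
  simp only [Complex.normSq_apply, Complex.sub_re, Complex.sub_im, Complex.one_re,
    Complex.one_im]
  rw [Complex.normSq_apply] at hN
  simp only [Complex.sub_re, Complex.sub_im, Complex.one_re, Complex.one_im] at hN
  have hD : 1 - w.re * 2 + w.re ^ 2 + w.im ^ 2 ≠ 0 := fun h => hN (by linear_combination h)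
  linear_combination (-1 : ℝ) * mul_inv_cancel₀ hD

lemma integral_inv_one_sub {u : ℂ} (hu : ‖u‖ < 1) :
    ∫ t in Set.Ioc (0:ℝ) (2*Real.pi), (1 - u * Complex.exp (t * Complex.I))⁻¹
      = (2 * Real.pi : ℝ) := by
  have hpi : (0:ℝ) < 2 * Real.pi := by positivity
  have hgeom : ∀ t : ℝ, (1 - u * Complex.exp (t * Complex.I))⁻¹
      = ∑' k : ℕ, u ^ k * Complex.exp ((k * Complex.I) * t) := by
    intro t
    have h : ‖u * Complex.exp (t * Complex.I)‖ < 1 := by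
      rw [abs_unit_exp]; exact hu
    rw [← tsum_geometric_of_norm_lt_one h]
    congr 1
    ext k
    rw [mul_pow, ← Complex.exp_nat_mul]
    ring_nf
  simp_rw [hgeom]
  rw [MeasureTheory.integral_tsum]
  · rw [tsum_eq_single 0]
    · simp [Real.volume_Ioc, ENNReal.toReal_ofReal hpi.le, max_eq_left hpi.le]
    · intro k hk
      have hk0 : (k : ℂ) * Complex.I ≠ 0 := by
        simp [Complex.ext_iff, Nat.cast_eq_zero, hk]
      rw [MeasureTheory.integral_const_mul, ← intervalIntegral.integral_of_le hpi.le,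
        integral_exp_mul_complex hk0]
      have : Complex.exp ((k : ℂ) * Complex.I * (2 * Real.pi : ℝ)) = 1 := by
        rw [show ((k : ℂ) * Complex.I * ((2 * Real.pi : ℝ) : ℂ))
            = (k : ℤ) * (2 * Real.pi * Complex.I) by push_cast; ring]
        exact Complex.exp_int_mul_two_pi_mul_I k
      push_cast at this
      simp [sub_eq_zero, this]
  · intro k
    exact ((continuous_const.mul (Complex.continuous_exp.comp
      (continuous_const.mul Complex.continuous_ofReal))).aestronglyMeasurable)
  · have hcalc : ∀ k : ℕ, (∫⁻ t in Set.Ioc (0:ℝ) (2*Real.pi),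
        ‖u ^ k * Complex.exp ((k * Complex.I) * t)‖ₑ)
        = ENNReal.ofReal (2 * Real.pi) * (‖u‖₊ : ENNReal) ^ k := by
      intro k
      have : ∀ t : ℝ, (‖u ^ k * Complex.exp ((k * Complex.I) * t)‖ₑ : ENNReal)
          = (‖u‖₊ : ENNReal) ^ k := by
        intro t
        have : ‖u ^ k * Complex.exp ((k * Complex.I) * t)‖ = ‖u‖ ^ k := by
          rw [norm_mul, Complex.norm_exp, norm_pow]
          simp [Complex.mul_re]
        rw [enorm_eq_nnnorm, ← ENNReal.coe_pow]
        congr 1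
        ext
        simpa using this
      simp_rw [this]
      rw [MeasureTheory.setLIntegral_const, Real.volume_Ioc]
      rw [mul_comm]
      congr 1
      norm_num
    rw [ne_eq]
    simp_rw [hcalc]
    rw [ENNReal.tsum_mul_left]
    refine ENNReal.mul_ne_top ENNReal.ofReal_ne_top ?_
    rw [ENNReal.tsum_geometric]
    refine ENNReal.inv_ne_top.mpr ?_
    have hlt : ‖u‖₊ < 1 := by
      rw [← NNReal.coe_lt_coe]
      simpa using hu
    have hlt' : (‖u‖₊ : ENNReal) < 1 := by exact_mod_cast hlt
    simp [tsub_eq_zero_iff_le, not_le, hlt', hlt]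

lemma integral_poissonD {u : ℂ} (hu : ‖u‖ < 1) :
    ∫ t in Set.Ioc (0:ℝ) (2*Real.pi), poissonD (u * Complex.exp (t * Complex.I))
      = 2 * Real.pi := by
  have hpi : (0:ℝ) < 2 * Real.pi := by positivity
  have hvol : volume (Set.Ioc (0:ℝ) (2*Real.pi)) = ENNReal.ofReal (2*Real.pi) := by
    simp [Real.volume_Ioc]
  have hne : ∀ t : ℝ, (1:ℂ) - u * Complex.exp (t * Complex.I) ≠ 0 := fun t =>
    one_sub_ne (by rw [abs_unit_exp]; exact hu)
  have hcont : Continuous fun t : ℝ => (-1 + 2 * (1 - u * Complex.exp (t * Complex.I))⁻¹ : ℂ) := by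
    refine continuous_const.add (continuous_const.mul (Continuous.inv₀ (by fun_prop) hne))
  have hint : MeasureTheory.IntegrableOn
      (fun t : ℝ => (-1 + 2 * (1 - u * Complex.exp (t * Complex.I))⁻¹ : ℂ))
      (Set.Ioc 0 (2*Real.pi)) :=
    (hcont.integrableOn_Icc (a := 0) (b := 2*Real.pi)).mono_set Set.Ioc_subset_Icc_self
  have hconst : MeasureTheory.IntegrableOn (fun _ : ℝ => (-1 : ℂ))
      (Set.Ioc 0 (2*Real.pi)) := by
    apply (MeasureTheory.integrableOn_const_iff (C := (-1:ℂ))).mpr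
    right; rw [hvol]; exact ENNReal.ofReal_lt_top
  have h2 : MeasureTheory.IntegrableOn
      (fun t : ℝ => (2 : ℂ) * (1 - u * Complex.exp (t * Complex.I))⁻¹)
      (Set.Ioc 0 (2*Real.pi)) := by
    have h3 := hint.sub hconst
    refine h3.congr ?_
    filter_upwards with t
    simp
  have h1 : ∀ t : ℝ, poissonD (u * Complex.exp (t * Complex.I))
      = (-1 + 2 * (1 - u * Complex.exp (t * Complex.I))⁻¹ : ℂ).re := fun t =>
    poissonD_re (by rw [abs_unit_exp]; exact hu)
  simp_rw [h1, ← RCLike.re_to_complex]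
  rw [integral_re hint, RCLike.re_to_complex]
  rw [MeasureTheory.integral_add hconst h2, MeasureTheory.integral_const,
    MeasureTheory.integral_const_mul, integral_inv_one_sub hu,
    measureReal_restrict_apply_univ, measureReal_def, hvol, ENNReal.toReal_ofReal hpi.le]
  simp [Complex.real_smul]
  ring

/-! ### The uniform measure on `[0, 2π)` -/

noncomputable def nuT : MeasureTheory.Measure ℝ :=
  (ENNReal.ofReal (2 * Real.pi))⁻¹ • volume.restrict (Set.Ico 0 (2 * Real.pi))

lemma nuT_univ : nuT Set.univ = 1 := by
  have hpi : (0:ℝ) < 2 * Real.pi := by positivity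
  rw [nuT, MeasureTheory.Measure.smul_apply, MeasureTheory.Measure.restrict_apply_univ,
    Real.volume_Ico]
  simp only [sub_zero, smul_eq_mul]
  exact ENNReal.inv_mul_cancel (by simp [hpi, Real.pi_pos]) ENNReal.ofReal_ne_top

instance : MeasureTheory.IsProbabilityMeasure nuT := ⟨nuT_univ⟩

lemma lintegral_nuT_poissonD {u : ℂ} (hu : ‖u‖ < 1) :
    ∫⁻ t, ENNReal.ofReal (poissonD (u * Complex.exp (t * Complex.I))) ∂nuT = 1 := by
  have hpi : (0:ℝ) < 2 * Real.pi := by positivity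
  rw [nuT, MeasureTheory.lintegral_smul_measure]
  rw [MeasureTheory.Measure.restrict_congr_set MeasureTheory.Ico_ae_eq_Ioc]
  have hcont : Continuous fun t : ℝ => poissonD (u * Complex.exp (t * Complex.I)) := by
    unfold poissonD
    refine Continuous.div (by fun_prop) (by fun_prop) ?_
    intro t
    have h := one_sub_ne (w := u * Complex.exp (t * Complex.I)) (by rw [abs_unit_exp]; exact hu)
    exact pow_ne_zero 2 (norm_ne_zero_iff.mpr h)
  have hint : MeasureTheory.IntegrableOn
      (fun t : ℝ => poissonD (u * Complex.exp (t * Complex.I))) (Set.Ioc 0 (2*Real.pi)) :=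
    (hcont.integrableOn_Icc (a := 0) (b := 2*Real.pi)).mono_set Set.Ioc_subset_Icc_self
  rw [← MeasureTheory.ofReal_integral_eq_lintegral_ofReal hint
    (Filter.Eventually.of_forall fun t => poissonD_nonneg (by rw [abs_unit_exp]; exact hu.le))]
  rw [integral_poissonD hu]
  exact ENNReal.inv_mul_cancel (by simp [hpi, Real.pi_pos]) ENNReal.ofReal_ne_top

lemma lintegral_poissonD_rot (μ : MeasureTheory.Measure ℂ)
    [MeasureTheory.IsProbabilityMeasure μ]
    (hd : ∀ᵐ c ∂μ, ‖c‖ < 1)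
    (hrot : ∀ t : ℝ, μ.map (fun z => Complex.exp (t * Complex.I) * z) = μ)
    {W : ℂ} (hW : ‖W‖ = 1 ∨ W = 0) :
    ∫⁻ c, ENNReal.ofReal (poissonD ((starRingEnd ℂ) c * W)) ∂μ = 1 := by
  rcases hW with hW | hW
  swap
  · simp [hW, poissonD_zero]
  have hFm : Measurable fun c : ℂ => ENNReal.ofReal (poissonD ((starRingEnd ℂ) c * W)) := by
    fun_prop
  have key : ∀ t : ℝ, ∫⁻ c, ENNReal.ofReal (poissonD ((starRingEnd ℂ) c * W)) ∂μ
      = ∫⁻ c, ENNReal.ofReal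
          (poissonD ((starRingEnd ℂ) (Complex.exp (t * Complex.I) * c) * W)) ∂μ := by
    intro t
    conv_lhs => rw [← hrot t]
    rw [MeasureTheory.lintegral_map hFm (by fun_prop)]
  calc ∫⁻ c, ENNReal.ofReal (poissonD ((starRingEnd ℂ) c * W)) ∂μ
      = ∫⁻ t, ∫⁻ c, ENNReal.ofReal
          (poissonD ((starRingEnd ℂ) (Complex.exp (t * Complex.I) * c) * W)) ∂μ ∂nuT := by
        simp_rw [← key]
        rw [MeasureTheory.lintegral_const]
        simp
    _ = ∫⁻ c, ∫⁻ t, ENNReal.ofReal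
          (poissonD ((starRingEnd ℂ) (Complex.exp (t * Complex.I) * c) * W)) ∂nuT ∂μ := by
        rw [MeasureTheory.lintegral_lintegral_swap (by fun_prop)]
    _ = ∫⁻ c, 1 ∂μ := by
        apply MeasureTheory.lintegral_congr_ae
        filter_upwards [hd] with c hc
        have hpt2 : ∀ t : ℝ, poissonD ((starRingEnd ℂ) (Complex.exp (t * Complex.I) * c) * W)
            = poissonD ((c * (starRingEnd ℂ) W) * Complex.exp (t * Complex.I)) := by
          intro t
          rw [show (starRingEnd ℂ) (Complex.exp (t * Complex.I) * c) * W
              = (starRingEnd ℂ) ((c * (starRingEnd ℂ) W) * Complex.exp (t * Complex.I)) by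
            simp only [map_mul, Complex.conj_conj]; ring, poissonD_conj]
        simp_rw [hpt2]
        exact lintegral_nuT_poissonD (by rw [norm_mul, Complex.norm_conj, hW, mul_one]; exact hc)
    _ = 1 := by simp

/-! ### Finite-coordinate versions -/

noncomputable def extV (n : ℕ) (x : Fin n → ℂ) : ℕ → ℂ :=
  fun k => if h : k < n then x ⟨k, h⟩ else 0

@[fun_prop] lemma measurable_extV (n : ℕ) : Measurable (extV n) := by
  apply measurable_pi_lambda
  intro k
  by_cases h : k < n
  · simp only [extV, dif_pos h]; exact measurable_pi_apply _
  · simp only [extV, dif_neg h]; exact measurable_const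

noncomputable def gN (n : ℕ) (q : ℝ × (Fin n → ℂ)) : ℝ :=
  (‖phiN (extV n q.2) n (Complex.exp (q.1 * Complex.I))‖)⁻¹ ^ 2

noncomputable def WN (n : ℕ) (q : ℝ × (Fin n → ℂ)) : ℂ :=
  phiNStar (extV n q.2) n (Complex.exp (q.1 * Complex.I)) /
    (Complex.exp (q.1 * Complex.I) * phiN (extV n q.2) n (Complex.exp (q.1 * Complex.I)))

@[fun_prop] lemma measurable_gN (n : ℕ) : Measurable (gN n) := by
  unfold gN phiN; fun_prop

lemma gN_nonneg (n : ℕ) (q : ℝ × (Fin n → ℂ)) : 0 ≤ gN n q := by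
  unfold gN; positivity

@[fun_prop] lemma measurable_WN (n : ℕ) : Measurable (WN n) := by
  unfold WN phiN phiNStar; fun_prop

lemma abs_exp_I (θ : ℝ) : ‖Complex.exp (θ * Complex.I)‖ = 1 := by
  rw [Complex.norm_exp]; simp

lemma extV_agree (n : ℕ) (α : ℕ → ℂ) : ∀ k < n, extV n (fun i : Fin n => α i) k = α k := by
  intro k hk
  simp [extV, dif_pos hk]

lemma szego_extV (n : ℕ) (α : ℕ → ℂ) (z : ℂ) :
    szego (extV n (fun i : Fin n => α i)) n z = szego α n z :=
  szego_congr (extV_agree n α) z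

lemma gN_eq (n : ℕ) (α : ℕ → ℂ) (θ : ℝ) :
    gN n (θ, fun i : Fin n => α i)
      = (‖phiN α n (Complex.exp (θ * Complex.I))‖)⁻¹ ^ 2 := by
  unfold gN phiN
  rw [szego_extV]

lemma WN_eq (n : ℕ) (α : ℕ → ℂ) (θ : ℝ) :
    WN n (θ, fun i : Fin n => α i)
      = phiNStar α n (Complex.exp (θ * Complex.I)) /
        (Complex.exp (θ * Complex.I) * phiN α n (Complex.exp (θ * Complex.I))) := by
  unfold WN phiN phiNStar
  rw [szego_extV]

lemma WN_mod (n : ℕ) (q : ℝ × (Fin n → ℂ)) :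
    ‖WN n q‖ = 1 ∨ WN n q = 0 := by
  set z := Complex.exp (q.1 * Complex.I)
  have hz : ‖z‖ = 1 := abs_exp_I q.1
  by_cases hφ : phiN (extV n q.2) n z = 0
  · right
    unfold WN
    rw [show phiN (extV n q.2) n z = 0 from hφ]
    have : phiNStar (extV n q.2) n z = 0 := by
      rw [← norm_eq_zero] at hφ ⊢
      rw [abs_phiNStar _ n hz, hφ]
    rw [this]
    simp
  · left
    unfold WN
    rw [norm_div, abs_phiNStar _ n hz, norm_mul, hz, one_mul,
      div_self (norm_ne_zero_iff.mpr hφ)]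

/-! ### Independence -/

lemma indep_FG (Q : MeasureTheory.Measure (ℕ → ℂ)) [MeasureTheory.IsProbabilityMeasure Q]
    (hindep : iIndepFun (fun k (α : ℕ → ℂ) => α k) Q) (n : ℕ) :
    IndepFun (fun α : ℕ → ℂ => fun i : Fin n => α i) (fun α : ℕ → ℂ => α n) Q := by
  have hdisj : Disjoint (Finset.range n) ({n} : Finset ℕ) := by
    simp only [Finset.disjoint_left, Finset.mem_range, Finset.mem_singleton]
    omega
  have h1 := hindep.indepFun_finset (Finset.range n) {n} hdisj
    (fun i => measurable_pi_apply i)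
  have hφ : Measurable fun v : {x // x ∈ Finset.range n} → ℂ =>
      fun i : Fin n => v ⟨i.1, Finset.mem_range.mpr i.2⟩ :=
    measurable_pi_lambda _ (fun i => measurable_pi_apply _)
  have hψ : Measurable fun v : {x // x ∈ ({n} : Finset ℕ)} → ℂ =>
      v ⟨n, Finset.mem_singleton_self n⟩ := measurable_pi_apply _
  exact h1.comp hφ hψ

lemma map_prod_eq (Q : MeasureTheory.Measure (ℕ → ℂ)) [MeasureTheory.IsProbabilityMeasure Q]
    (hindep : iIndepFun (fun k (α : ℕ → ℂ) => α k) Q) (n : ℕ) :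
    Q.map (fun α : ℕ → ℂ => ((fun i : Fin n => α i), α n))
      = (Q.map (fun α : ℕ → ℂ => fun i : Fin n => α i)).prod
          (Q.map (fun α : ℕ → ℂ => α n)) :=
  (indepFun_iff_map_prod_eq_prod_map_map
    ((measurable_pi_lambda _ (fun i => measurable_pi_apply _)).aemeasurable)
    ((measurable_pi_apply n).aemeasurable)).mp (indep_FG Q hindep n)

end Aux

theorem bernstein_szego_martingale
    (Q : Measure (ℕ → ℂ)) [IsProbabilityMeasure Q]
    (hdisk : ∀ᵐ α ∂Q, ∀ k, ‖α k‖ < 1)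
    (hindep : iIndepFun (fun k (α : ℕ → ℂ) => α k) Q)
    (hrot : ∀ k (t : ℝ),
      (Q.map (fun α => α k)).map (fun z => Complex.exp (t * Complex.I) * z) =
        Q.map (fun α => α k)) :
    let P : Measure ((ℕ → ℂ) × ℝ) :=
      Q.prod ((ENNReal.ofReal (2 * Real.pi))⁻¹ • volume.restrict (Set.Ico 0 (2 * Real.pi)));
    let G : ℕ → MeasurableSpace ((ℕ → ℂ) × ℝ) := fun n =>
      MeasurableSpace.comap (fun ω => (ω.2, fun i : Fin n => ω.1 i)) inferInstance;
    let f : ℕ → ((ℕ → ℂ) × ℝ) → ℝ := fun n ω =>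
      (‖phiN ω.1 n (Complex.exp (ω.2 * Complex.I))‖)⁻¹ ^ 2;
    ∀ n : ℕ,
      StronglyMeasurable[G n] (f n) ∧ Integrable (f n) P ∧
        P[f (n + 1)|G n] =ᵐ[P] f n := by
  intro P G f
  have hPnu : P = Q.prod nuT := rfl
  haveI : IsProbabilityMeasure P := by rw [hPnu]; infer_instance
  -- basic measurability
  have hπ : ∀ n : ℕ, Measurable (fun ω : (ℕ → ℂ) × ℝ => (ω.2, fun i : Fin n => ω.1 i)) :=
    fun n => measurable_snd.prodMk
      (measurable_pi_lambda _ (fun i => (measurable_pi_apply (i : ℕ)).comp measurable_fst))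
  have hfm : ∀ n : ℕ, Measurable (f n) := by
    intro n
    show Measurable fun ω : (ℕ → ℂ) × ℝ =>
      (‖phiN ω.1 n (Complex.exp (ω.2 * Complex.I))‖)⁻¹ ^ 2
    unfold phiN
    fun_prop
  have hf_eq : ∀ n (ω : (ℕ → ℂ) × ℝ),
      f n ω = gN n (ω.2, fun i : Fin n => ω.1 i) := by
    intro n ω
    rw [gN_eq]
  have hfnonneg : ∀ n (ω : (ℕ → ℂ) × ℝ), 0 ≤ f n ω := by
    intro n ω; positivity
  -- a.e. all coordinates in the disk
  have hmeasD : MeasurableSet {α : ℕ → ℂ | ∀ k, ‖α k‖ < 1} := by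
    rw [Set.setOf_forall]
    exact MeasurableSet.iInter fun k =>
      measurableSet_lt (by fun_prop) measurable_const
  have haeP : ∀ᵐ ω ∂P, ∀ k, ‖ω.1 k‖ < 1 := by
    rw [MeasureTheory.ae_iff]
    have hset : {ω : (ℕ → ℂ) × ℝ | ¬ ∀ k, ‖ω.1 k‖ < 1}
        = {α : ℕ → ℂ | ∀ k, ‖α k‖ < 1}ᶜ ×ˢ Set.univ := by
      ext ω; simp [Set.mem_prod]
    rw [hPnu, hset, MeasureTheory.Measure.prod_prod]
    rw [show Q {α : ℕ → ℂ | ∀ k, ‖α k‖ < 1}ᶜ = 0 from MeasureTheory.ae_iff.mp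
      (hdisk.mono fun α h => h)]
    simp
  -- the key lintegral identity
  have key : ∀ n : ℕ, ∀ S : Set (ℝ × (Fin n → ℂ)), MeasurableSet S →
      ∫⁻ ω, S.indicator (fun _ => (1:ENNReal)) ((fun ω : (ℕ → ℂ) × ℝ =>
          (ω.2, fun i : Fin n => ω.1 i)) ω) * ENNReal.ofReal (f (n+1) ω) ∂P
      = ∫⁻ ω, S.indicator (fun _ => (1:ENNReal)) ((fun ω : (ℕ → ℂ) × ℝ =>
          (ω.2, fun i : Fin n => ω.1 i)) ω) * ENNReal.ofReal (f n ω) ∂P := by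
    intro n S hS
    have hind : Measurable (S.indicator (fun _ => (1:ENNReal))) :=
      measurable_const.indicator hS
    have instμn : IsProbabilityMeasure (Q.map (fun α : ℕ → ℂ => α n)) :=
      Measure.isProbabilityMeasure_map (measurable_pi_apply n).aemeasurable
    have instμF : IsProbabilityMeasure
        (Q.map (fun α : ℕ → ℂ => fun i : Fin n => α i)) :=
      Measure.isProbabilityMeasure_map
        ((measurable_pi_lambda _ (fun i => measurable_pi_apply _)).aemeasurable)
    -- Step 1 : a.e. rewrite of the integrand
    have step1 : ∫⁻ ω, S.indicator (fun _ => (1:ENNReal)) ((fun ω : (ℕ → ℂ) × ℝ =>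
          (ω.2, fun i : Fin n => ω.1 i)) ω) * ENNReal.ofReal (f (n+1) ω) ∂P
        = ∫⁻ ω, S.indicator (fun _ => (1:ENNReal)) (ω.2, fun i : Fin n => ω.1 i)
            * ENNReal.ofReal (gN n (ω.2, fun i : Fin n => ω.1 i))
            * ENNReal.ofReal (poissonD ((starRingEnd ℂ) (ω.1 n)
                * WN n (ω.2, fun i : Fin n => ω.1 i))) ∂P := by
      apply MeasureTheory.lintegral_congr_ae
      filter_upwards [haeP] with ω hω
      have hkey : ENNReal.ofReal (f (n+1) ω)
          = ENNReal.ofReal (gN n (ω.2, fun i : Fin n => ω.1 i))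
            * ENNReal.ofReal (poissonD ((starRingEnd ℂ) (ω.1 n)
                * WN n (ω.2, fun i : Fin n => ω.1 i))) := by
        rw [← ENNReal.ofReal_mul (gN_nonneg n _)]
        congr 1
        rw [gN_eq, WN_eq]
        exact f_succ_eq ω.1 n (abs_exp_I ω.2) (hω n)
      rw [mul_assoc, ← hkey]
    rw [step1]
    -- Step 2 : Tonelli, then pointwise-in-θ computation
    have hmeas2 : Measurable fun ω : (ℕ → ℂ) × ℝ =>
        S.indicator (fun _ => (1:ENNReal)) (ω.2, fun i : Fin n => ω.1 i)
          * ENNReal.ofReal (gN n (ω.2, fun i : Fin n => ω.1 i))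
          * ENNReal.ofReal (poissonD ((starRingEnd ℂ) (ω.1 n)
              * WN n (ω.2, fun i : Fin n => ω.1 i))) := by
      refine Measurable.mul (Measurable.mul (hind.comp (hπ n)) ?_) ?_
      · exact ENNReal.measurable_ofReal.comp ((measurable_gN n).comp (hπ n))
      · apply ENNReal.measurable_ofReal.comp
        apply measurable_poissonD.comp
        exact (measurable_conj'.comp ((measurable_pi_apply n).comp measurable_fst)).mul
          ((measurable_WN n).comp (hπ n))
    have hmeas3 : Measurable fun ω : (ℕ → ℂ) × ℝ =>
        S.indicator (fun _ => (1:ENNReal)) (ω.2, fun i : Fin n => ω.1 i)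
          * ENNReal.ofReal (gN n (ω.2, fun i : Fin n => ω.1 i)) :=
      (hind.comp (hπ n)).mul (ENNReal.measurable_ofReal.comp ((measurable_gN n).comp (hπ n)))
    have stepR : ∫⁻ ω, S.indicator (fun _ => (1:ENNReal)) ((fun ω : (ℕ → ℂ) × ℝ =>
          (ω.2, fun i : Fin n => ω.1 i)) ω) * ENNReal.ofReal (f n ω) ∂P
        = ∫⁻ ω, S.indicator (fun _ => (1:ENNReal)) (ω.2, fun i : Fin n => ω.1 i)
            * ENNReal.ofReal (gN n (ω.2, fun i : Fin n => ω.1 i)) ∂P :=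
      MeasureTheory.lintegral_congr fun ω => by rw [hf_eq n ω]
    rw [stepR, hPnu, MeasureTheory.lintegral_prod_symm _ hmeas2.aemeasurable,
      MeasureTheory.lintegral_prod_symm _ hmeas3.aemeasurable]
    refine MeasureTheory.lintegral_congr fun θ => ?_
    show ∫⁻ α, S.indicator (fun _ => (1:ENNReal)) (θ, fun i : Fin n => α i)
          * ENNReal.ofReal (gN n (θ, fun i : Fin n => α i))
          * ENNReal.ofReal (poissonD ((starRingEnd ℂ) (α n)
              * WN n (θ, fun i : Fin n => α i))) ∂Q
        = ∫⁻ α, S.indicator (fun _ => (1:ENNReal)) (θ, fun i : Fin n => α i)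
            * ENNReal.ofReal (gN n (θ, fun i : Fin n => α i)) ∂Q
    -- now a fixed θ; integrate out α using independence
    have hF : Measurable (fun α : ℕ → ℂ => fun i : Fin n => α i) :=
      measurable_pi_lambda _ (fun i => measurable_pi_apply _)
    have hGn : Measurable (fun α : ℕ → ℂ => α n) := measurable_pi_apply n
    have hK : Measurable fun p : (Fin n → ℂ) × ℂ =>
        S.indicator (fun _ => (1:ENNReal)) (θ, p.1)
          * ENNReal.ofReal (gN n (θ, p.1))
          * ENNReal.ofReal (poissonD ((starRingEnd ℂ) p.2 * WN n (θ, p.1))) := by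
      have hq : Measurable fun p : (Fin n → ℂ) × ℂ => (θ, p.1) :=
        measurable_const.prodMk measurable_fst
      refine Measurable.mul (Measurable.mul (hind.comp hq) ?_) ?_
      · exact ENNReal.measurable_ofReal.comp ((measurable_gN n).comp hq)
      · apply ENNReal.measurable_ofReal.comp
        apply measurable_poissonD.comp
        exact (measurable_conj'.comp measurable_snd).mul ((measurable_WN n).comp hq)
    have e1 : ∫⁻ α, S.indicator (fun _ => (1:ENNReal)) (θ, fun i : Fin n => α i)
          * ENNReal.ofReal (gN n (θ, fun i : Fin n => α i))
          * ENNReal.ofReal (poissonD ((starRingEnd ℂ) (α n)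
              * WN n (θ, fun i : Fin n => α i))) ∂Q
        = ∫⁻ p, S.indicator (fun _ => (1:ENNReal)) (θ, p.1)
            * ENNReal.ofReal (gN n (θ, p.1))
            * ENNReal.ofReal (poissonD ((starRingEnd ℂ) p.2 * WN n (θ, p.1)))
            ∂((Q.map (fun α : ℕ → ℂ => fun i : Fin n => α i)).prod
              (Q.map (fun α : ℕ → ℂ => α n))) := by
      rw [← map_prod_eq Q hindep n,
        MeasureTheory.lintegral_map hK (hF.prodMk hGn)]
    rw [e1, MeasureTheory.lintegral_prod _ hK.aemeasurable]
    have e2 : ∀ x : Fin n → ℂ,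
        ∫⁻ c, S.indicator (fun _ => (1:ENNReal)) (θ, x)
            * ENNReal.ofReal (gN n (θ, x))
            * ENNReal.ofReal (poissonD ((starRingEnd ℂ) c * WN n (θ, x)))
            ∂(Q.map (fun α : ℕ → ℂ => α n))
        = S.indicator (fun _ => (1:ENNReal)) (θ, x) * ENNReal.ofReal (gN n (θ, x)) := by
      intro x
      rw [MeasureTheory.lintegral_const_mul _ (by fun_prop)]
      rw [lintegral_poissonD_rot (Q.map (fun α : ℕ → ℂ => α n)) ?_ (hrot n) (WN_mod n (θ, x)),
        mul_one]
      · exact (MeasureTheory.ae_map_iff (measurable_pi_apply n).aemeasurable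
          (measurableSet_lt (by fun_prop) measurable_const)).mpr
          (hdisk.mono fun α h => h n)
    simp_rw [e2]
    exact MeasureTheory.lintegral_map
      ((hind.comp (measurable_const.prodMk measurable_id)).mul
        (ENNReal.measurable_ofReal.comp
          ((measurable_gN n).comp (measurable_const.prodMk measurable_id)))) hF
  -- set-lintegral version of the key identity
  have key' : ∀ n : ℕ, ∀ S : Set (ℝ × (Fin n → ℂ)), MeasurableSet S →
      ∫⁻ ω in (fun ω : (ℕ → ℂ) × ℝ => (ω.2, fun i : Fin n => ω.1 i)) ⁻¹' S,
          ENNReal.ofReal (f (n+1) ω) ∂P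
      = ∫⁻ ω in (fun ω : (ℕ → ℂ) × ℝ => (ω.2, fun i : Fin n => ω.1 i)) ⁻¹' S,
          ENNReal.ofReal (f n ω) ∂P := by
    intro n S hS
    have hconv : ∀ g : ((ℕ → ℂ) × ℝ) → ENNReal,
        ∫⁻ ω in (fun ω : (ℕ → ℂ) × ℝ => (ω.2, fun i : Fin n => ω.1 i)) ⁻¹' S, g ω ∂P
        = ∫⁻ ω, S.indicator (fun _ => (1:ENNReal))
            ((fun ω : (ℕ → ℂ) × ℝ => (ω.2, fun i : Fin n => ω.1 i)) ω) * g ω ∂P := by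
      intro g
      rw [← MeasureTheory.lintegral_indicator ((hπ n) hS)]
      apply MeasureTheory.lintegral_congr
      intro ω
      simp only [Set.indicator_apply, Set.mem_preimage]
      by_cases h : (ω.2, fun i : Fin n => ω.1 i) ∈ S
      · simp [h]
      · simp [h]
    rw [hconv, hconv]
    exact key n S hS
  -- integrability
  have hint : ∀ n : ℕ, Integrable (f n) P := by
    intro n
    induction n with
    | zero =>
      have : f 0 = fun _ => 1 := by
        funext ω
        show (‖(szego ω.1 0 (Complex.exp (ω.2 * Complex.I))).1‖)⁻¹ ^ 2 = 1
        simp [szego]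
      rw [this]
      exact integrable_const 1
    | succ m ih =>
      refine ⟨(hfm (m+1)).aestronglyMeasurable, ?_⟩
      rw [MeasureTheory.hasFiniteIntegral_iff_ofReal
        (Filter.Eventually.of_forall (hfnonneg (m+1)))]
      have htot := key' m Set.univ MeasurableSet.univ
      rw [Set.preimage_univ, MeasureTheory.Measure.restrict_univ] at htot
      rw [htot]
      rw [← MeasureTheory.hasFiniteIntegral_iff_ofReal
        (Filter.Eventually.of_forall (hfnonneg m))]
      exact ih.hasFiniteIntegral
  -- strong measurability wrt G n
  intro n
  have hπG : @Measurable _ _ (G n) _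
      (fun ω : (ℕ → ℂ) × ℝ => (ω.2, fun i : Fin n => ω.1 i)) :=
    Measurable.of_comap_le le_rfl
  have hSM : StronglyMeasurable[G n] (f n) := by
    have : f n = (gN n) ∘ (fun ω : (ℕ → ℂ) × ℝ => (ω.2, fun i : Fin n => ω.1 i)) := by
      funext ω; exact hf_eq n ω
    rw [this]
    exact ((measurable_gN n).comp hπG).stronglyMeasurable
  have hGle : G n ≤ (inferInstance : MeasurableSpace ((ℕ → ℂ) × ℝ)) :=
    (hπ n).comap_le
  refine ⟨hSM, hint n, ?_⟩
  -- conditional expectation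
  haveI hsf : SigmaFinite (P.trim hGle) := by infer_instance
  refine (ae_eq_condExp_of_forall_setIntegral_eq hGle (hint (n+1))
    (fun s _ _ => (hint n).integrableOn) ?_ hSM.aestronglyMeasurable).symm
  intro s hs _
  obtain ⟨S, hSm, rfl⟩ := MeasurableSpace.measurableSet_comap.mp hs
  have hi1 : ∫ x in (fun ω : (ℕ → ℂ) × ℝ => (ω.2, fun i : Fin n => ω.1 i)) ⁻¹' S, f n x ∂P
      = (∫⁻ x in (fun ω : (ℕ → ℂ) × ℝ => (ω.2, fun i : Fin n => ω.1 i)) ⁻¹' S,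
          ENNReal.ofReal (f n x) ∂P).toReal :=
    MeasureTheory.integral_eq_lintegral_of_nonneg_ae
      (Filter.Eventually.of_forall (hfnonneg n)) (hfm n).aestronglyMeasurable
  have hi2 : ∫ x in (fun ω : (ℕ → ℂ) × ℝ => (ω.2, fun i : Fin n => ω.1 i)) ⁻¹' S,
        f (n+1) x ∂P
      = (∫⁻ x in (fun ω : (ℕ → ℂ) × ℝ => (ω.2, fun i : Fin n => ω.1 i)) ⁻¹' S,
          ENNReal.ofReal (f (n+1) x) ∂P).toReal :=
    MeasureTheory.integral_eq_lintegral_of_nonneg_ae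
      (Filter.Eventually.of_forall (hfnonneg (n+1))) (hfm (n+1)).aestronglyMeasurable
  rw [hi1, hi2, key' n S hSm]
end

section
/- Let Z be a random variable taking values in the open unit disk 𝔻 whose law Λ is invariant under every rotation z ↦ e^{it} z, and fix w with |w| = 1. Then the random variable Z(1 + conj(Z) w)/(1 + Z conj(w)) has law P_𝔻(z, w) dΛ(z) on 𝔻, where P_𝔻(z, w) = (1−|z|²)/|w−z|² is the Poisson kernel of the disk. -/
open MeasureTheory Complex Set
open scoped ENNReal

noncomputable section

namespace RotAux

/-- The angle function: `exp (ψ c s * I) = (exp (s*I) + c) / (1 + conj c * exp (s*I))`. -/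
def ψ (c : ℂ) (s : ℝ) : ℝ :=
  s + 2 * Real.arctan ((c * Complex.exp (-(s : ℂ) * Complex.I)).im /
    (1 + (c * Complex.exp (-(s : ℂ) * Complex.I)).re))

variable {c : ℂ}

lemma abs_mul_exp (c : ℂ) (s : ℝ) :
    ‖c * Complex.exp (-(s : ℂ) * Complex.I)‖ = ‖c‖ := by
  have h : (-(s : ℂ) * Complex.I) = ((-s : ℝ) : ℂ) * Complex.I := by push_cast; ring
  rw [norm_mul, h, Complex.norm_exp_ofReal_mul_I, mul_one]

lemma re_pos (hc : ‖c‖ < 1) (s : ℝ) :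
    0 < 1 + (c * Complex.exp (-(s : ℂ) * Complex.I)).re := by
  have h1 : |(c * Complex.exp (-(s : ℂ) * Complex.I)).re| ≤ ‖c‖ := by
    rw [← abs_mul_exp c s]; exact Complex.abs_re_le_norm _
  have h2 := (abs_le.mp h1).1
  linarith

lemma conj_aux (c : ℂ) (s : ℝ) :
    (starRingEnd ℂ) (c * Complex.exp (-(s : ℂ) * Complex.I)) =
      (starRingEnd ℂ) c * Complex.exp ((s : ℂ) * Complex.I) := by
  rw [map_mul, ← Complex.exp_conj]
  congr 1
  simp [map_mul, map_neg, Complex.conj_ofReal, Complex.conj_I]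

lemma exp_nonzero_aux (hc : ‖c‖ < 1) (s : ℝ) :
    (1 : ℂ) + (starRingEnd ℂ) c * Complex.exp ((s : ℂ) * Complex.I) ≠ 0 := by
  intro h
  have h1 : ‖(starRingEnd ℂ) c * Complex.exp ((s : ℂ) * Complex.I)‖ = 1 := by
    have : (starRingEnd ℂ) c * Complex.exp ((s : ℂ) * Complex.I) = -1 := by
      linear_combination h
    rw [this]; simp
  rw [norm_mul, Complex.norm_conj, Complex.norm_exp_ofReal_mul_I, mul_one] at h1
  linarith

lemma exp_psi (hc : ‖c‖ < 1) (s : ℝ) :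
    Complex.exp ((ψ c s : ℂ) * Complex.I) =
      (Complex.exp ((s : ℂ) * Complex.I) + c) /
        (1 + (starRingEnd ℂ) c * Complex.exp ((s : ℂ) * Complex.I)) := by
  set m : ℂ := 1 + c * Complex.exp (-(s : ℂ) * Complex.I) with hm
  have hre : 0 < m.re := by
    have := re_pos hc s
    simpa [hm] using this
  have hm0 : m ≠ 0 := by
    intro h; rw [h] at hre; simp at hre
  have harglt : |Complex.arg m| < Real.pi / 2 :=
    Complex.abs_arg_lt_pi_div_two_iff.mpr (Or.inl hre)
  have harg : Real.arctan (m.im / m.re) = Complex.arg m := by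
    rw [← Complex.tan_arg]
    exact Real.arctan_tan (abs_lt.mp harglt).1 (abs_lt.mp harglt).2
  have h1 : ψ c s = s + 2 * Complex.arg m := by
    rw [ψ]
    congr 2
    rw [← harg]
    congr 1 <;> simp [hm]
  have habs : ((‖m‖ : ℝ) : ℂ) ≠ 0 := by
    simpa using (norm_ne_zero_iff.mpr hm0)
  have hexp_arg := Complex.norm_mul_exp_arg_mul_I m
  have e1 : Complex.exp (Complex.arg m * Complex.I) = m / ((‖m‖ : ℝ) : ℂ) := by
    rw [eq_div_iff habs]
    linear_combination hexp_arg
  have hconjm : (starRingEnd ℂ) m =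
      1 + (starRingEnd ℂ) c * Complex.exp ((s : ℂ) * Complex.I) := by
    rw [hm, map_add, map_one, conj_aux]
  have hconj0 : (starRingEnd ℂ) m ≠ 0 := by
    intro h
    apply hm0
    simpa using congrArg (starRingEnd ℂ) h
  have hmabs : m * (starRingEnd ℂ) m = ((‖m‖ : ℝ) : ℂ) ^ 2 := by
    rw [Complex.mul_conj]
    norm_cast
    rw [Complex.normSq_eq_norm_sq]
  have hsq : (Complex.exp (Complex.arg m * Complex.I)) ^ 2 = m / (starRingEnd ℂ) m := by
    rw [e1, div_pow, ← hmabs, sq, mul_div_mul_left _ _ hm0]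
  have hexp : Complex.exp ((ψ c s : ℂ) * Complex.I) =
      Complex.exp ((s : ℂ) * Complex.I) * (Complex.exp (Complex.arg m * Complex.I)) ^ 2 := by
    rw [h1]
    push_cast
    rw [show ((s : ℂ) + 2 * (Complex.arg m : ℂ)) * Complex.I =
      (s : ℂ) * Complex.I + ((Complex.arg m : ℂ) * Complex.I + (Complex.arg m : ℂ) * Complex.I)
      from by ring, Complex.exp_add, Complex.exp_add, sq]
  have hinv : Complex.exp ((s : ℂ) * Complex.I) * Complex.exp (-(s : ℂ) * Complex.I) = 1 := by
    rw [← Complex.exp_add]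
    rw [show (s : ℂ) * Complex.I + -(s : ℂ) * Complex.I = 0 from by ring, Complex.exp_zero]
  have hnum : Complex.exp ((s : ℂ) * Complex.I) * m = Complex.exp ((s : ℂ) * Complex.I) + c := by
    rw [hm]
    linear_combination c * hinv
  rw [hexp, hsq, ← hconjm, mul_div_assoc', hnum]

lemma hasDerivAt_psi (hc : ‖c‖ < 1) (s : ℝ) :
    HasDerivAt (ψ c)
      ((1 - ‖c‖ ^ 2) /
        ‖1 + (starRingEnd ℂ) c * Complex.exp ((s : ℂ) * Complex.I)‖ ^ 2) s := by
  have hce : HasDerivAt (fun s' : ℝ => c * Complex.exp (-(s' : ℂ) * Complex.I))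
      (c * Complex.exp (-(s : ℂ) * Complex.I) * (-Complex.I)) s := by
    have h2 : HasDerivAt (fun y : ℂ => -y * Complex.I) (-Complex.I) (s : ℂ) := by
      simpa using ((hasDerivAt_id ((s : ℂ))).neg.mul_const Complex.I)
    have h1 : HasDerivAt (fun y : ℂ => c * Complex.exp (-y * Complex.I))
        (c * Complex.exp (-(s : ℂ) * Complex.I) * (-Complex.I)) (s : ℂ) := by
      simpa [mul_assoc] using (h2.cexp.const_mul c)
    exact h1.comp_ofReal
  set Cs := (c * Complex.exp (-(s : ℂ) * Complex.I)).re with hCs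
  set Ss := (c * Complex.exp (-(s : ℂ) * Complex.I)).im with hSs
  have hC : HasDerivAt (fun s' : ℝ => (c * Complex.exp (-(s' : ℂ) * Complex.I)).re) Ss s := by
    have h := Complex.reCLM.hasFDerivAt.comp_hasDerivAt s hce
    have hval : Complex.reCLM (c * Complex.exp (-(s : ℂ) * Complex.I) * -Complex.I) = Ss := by
      simp [hSs, Complex.mul_re]
    rw [hval] at h
    exact h
  have hS : HasDerivAt (fun s' : ℝ => (c * Complex.exp (-(s' : ℂ) * Complex.I)).im) (-Cs) s := by
    have h := Complex.imCLM.hasFDerivAt.comp_hasDerivAt s hce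
    have hval : Complex.imCLM (c * Complex.exp (-(s : ℂ) * Complex.I) * -Complex.I) = -Cs := by
      simp [hCs, Complex.mul_im]
    rw [hval] at h
    exact h
  have hP : 0 < 1 + Cs := re_pos hc s
  have hden : HasDerivAt (fun s' : ℝ => 1 + (c * Complex.exp (-(s' : ℂ) * Complex.I)).re) Ss s := by
    exact hC.const_add 1
  have hq : HasDerivAt
      (fun s' : ℝ => (c * Complex.exp (-(s' : ℂ) * Complex.I)).im /
        (1 + (c * Complex.exp (-(s' : ℂ) * Complex.I)).re))
      ((-Cs * (1 + Cs) - Ss * Ss) / (1 + Cs) ^ 2) s := by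
    exact hS.div hden (ne_of_gt hP)
  have harctan := (Real.hasDerivAt_arctan (Ss / (1 + Cs))).comp s hq
  have hres : HasDerivAt (ψ c)
      (1 + 2 * (1 / (1 + (Ss / (1 + Cs)) ^ 2) * ((-Cs * (1 + Cs) - Ss * Ss) / (1 + Cs) ^ 2))) s :=
    (hasDerivAt_id s).add (harctan.const_mul 2)
  have hA : ‖1 + (starRingEnd ℂ) c * Complex.exp ((s : ℂ) * Complex.I)‖ ^ 2
      = (1 + Cs) ^ 2 + Ss ^ 2 := by
    have hcj : (1 : ℂ) + (starRingEnd ℂ) c * Complex.exp ((s : ℂ) * Complex.I)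
        = (starRingEnd ℂ) (1 + c * Complex.exp (-(s : ℂ) * Complex.I)) := by
      rw [map_add, map_one, conj_aux]
    rw [hcj, Complex.norm_conj, Complex.sq_norm, Complex.normSq_apply]
    simp only [Complex.add_re, Complex.add_im, Complex.one_re, Complex.one_im, ← hCs, ← hSs]
    ring
  have hK : Cs ^ 2 + Ss ^ 2 = ‖c‖ ^ 2 := by
    rw [← abs_mul_exp c s, Complex.sq_norm, Complex.normSq_apply, ← hCs, ← hSs]
    ring
  have hPP : (0:ℝ) < (1 + Cs) ^ 2 := pow_pos hP 2
  have h2 : (0:ℝ) < (1 + Cs) ^ 2 + Ss ^ 2 := by nlinarith [sq_nonneg Ss]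
  convert hres using 1
  rw [hA, ← hK]
  field_simp
  ring

lemma one_add_conj_ne (hc : ‖c‖ < 1) (s : ℝ) :
    (0:ℝ) < ‖1 + (starRingEnd ℂ) c * Complex.exp ((s : ℂ) * Complex.I)‖ ^ 2 :=
  pow_pos (norm_pos_iff.mpr (exp_nonzero_aux hc s)) 2

lemma psi_deriv_pos (hc : ‖c‖ < 1) (s : ℝ) :
    0 < (1 - ‖c‖ ^ 2) /
        ‖1 + (starRingEnd ℂ) c * Complex.exp ((s : ℂ) * Complex.I)‖ ^ 2 := by
  apply div_pos _ (one_add_conj_ne hc s)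
  nlinarith [norm_nonneg c]

lemma psi_mono (hc : ‖c‖ < 1) : StrictMono (ψ c) :=
  strictMono_of_hasDerivAt_pos (fun s => hasDerivAt_psi hc s) (fun s => psi_deriv_pos hc s)

lemma exp_per (x : ℝ) :
    Complex.exp (((x + 2 * Real.pi : ℝ) : ℂ) * Complex.I) = Complex.exp ((x : ℂ) * Complex.I) := by
  push_cast
  rw [add_mul, Complex.exp_add, Complex.exp_two_pi_mul_I, mul_one]

lemma psi_per (c : ℂ) (x : ℝ) : ψ c (x + 2 * Real.pi) = ψ c x + 2 * Real.pi := by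
  have h : Complex.exp (-((x + 2 * Real.pi : ℝ) : ℂ) * Complex.I)
      = Complex.exp (-(x : ℂ) * Complex.I) := by
    push_cast
    rw [show (-((x:ℂ) + 2 * (Real.pi:ℂ))) * Complex.I
      = -(x:ℂ) * Complex.I + -(2 * (Real.pi:ℂ) * Complex.I) from by ring, Complex.exp_add,
      Complex.exp_neg, Complex.exp_two_pi_mul_I, inv_one, mul_one]
  rw [ψ, ψ]
  push_cast at h ⊢
  rw [h]
  ring

lemma psi_cont (hc : ‖c‖ < 1) : Continuous (ψ c) := by
  have h : Differentiable ℝ (ψ c) := fun s => (hasDerivAt_psi hc s).differentiableAt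
  exact h.continuous

lemma psi_image (hc : ‖c‖ < 1) :
    ψ c '' Set.Ioc 0 (2 * Real.pi) = Set.Ioc (ψ c 0) (ψ c 0 + 2 * Real.pi) := by
  have hmono := psi_mono hc
  have hper : ψ c (2 * Real.pi) = ψ c 0 + 2 * Real.pi := by
    simpa using psi_per c 0
  apply Set.Subset.antisymm
  · rintro _ ⟨x, hx, rfl⟩
    exact ⟨hmono hx.1, by rw [← hper]; exact hmono.monotone hx.2⟩
  · rw [← hper]
    exact fun y hy => intermediate_value_Ioc (by positivity) (psi_cont hc).continuousOn hy

/-- One-dimensional change of variables for the Lebesgue integral. -/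
lemma lintegral_image_eq_lintegral_abs_deriv_mul {s : Set ℝ} {f f' : ℝ → ℝ}
    (hs : MeasurableSet s) (hf' : ∀ x ∈ s, HasDerivWithinAt f (f' x) s x)
    (hf : Set.InjOn f s) (g : ℝ → ℝ≥0∞) :
    ∫⁻ x in f '' s, g x = ∫⁻ x in s, ENNReal.ofReal |f' x| * g (f x) := by
  simpa only [ContinuousLinearMap.det_toSpanSingleton] using
    MeasureTheory.lintegral_image_eq_lintegral_abs_det_fderiv_mul volume hs
      (fun x hx => (hf' x hx).hasFDerivWithinAt) hf g

/-- Shifting a `2π`-periodic `ℝ≥0∞`-valued integral. -/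
lemma lintegral_Ioc_per (F : ℝ → ℝ≥0∞) (hF : Function.Periodic F (2 * Real.pi)) (a : ℝ) :
    ∫⁻ t in Set.Ioc a (a + 2 * Real.pi), F t = ∫⁻ t in Set.Ioc 0 (2 * Real.pi), F t := by
  haveI : Fact (0 < 2 * Real.pi) := ⟨by positivity⟩
  have h1 := AddCircle.lintegral_preimage (2 * Real.pi) a (hF.lift)
  have h2 := AddCircle.lintegral_preimage (2 * Real.pi) 0 (hF.lift)
  simp only [Function.Periodic.lift_coe] at h1 h2
  rw [h1, ← h2, zero_add]

/-- The integrand on the right-hand side, as a function on `ℝ`. -/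
def Ffun (g : ℂ → ℝ≥0∞) (z c : ℂ) (t : ℝ) : ℝ≥0∞ :=
  g (z * Complex.exp ((t : ℂ) * Complex.I)) *
    ENNReal.ofReal ((1 - ‖c‖ ^ 2) /
      ‖1 - (starRingEnd ℂ) c * Complex.exp ((t : ℂ) * Complex.I)‖ ^ 2)

lemma Ffun_per (g : ℂ → ℝ≥0∞) (z c : ℂ) :
    Function.Periodic (Ffun g z c) (2 * Real.pi) := by
  intro x
  rw [Ffun, Ffun, exp_per x]

lemma hexpconj (s : ℝ) :
    (starRingEnd ℂ) (Complex.exp ((s : ℂ) * Complex.I)) = Complex.exp (-(s : ℂ) * Complex.I) := by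
  rw [← Complex.exp_conj]
  congr 1
  simp [Complex.conj_I]

lemma core {z w : ℂ} (hz : ‖z‖ < 1) (hw : ‖w‖ = 1) (g : ℂ → ℝ≥0∞) :
    (∫⁻ s in Set.Ioc (0:ℝ) (2 * Real.pi),
        g (Complex.exp ((s:ℂ) * Complex.I) * z *
            (1 + (starRingEnd ℂ) (Complex.exp ((s:ℂ) * Complex.I) * z) * w) /
          (1 + Complex.exp ((s:ℂ) * Complex.I) * z * (starRingEnd ℂ) w)))
    = ∫⁻ s in Set.Ioc (0:ℝ) (2 * Real.pi),
        g (Complex.exp ((s:ℂ) * Complex.I) * z) *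
          ENNReal.ofReal ((1 - ‖Complex.exp ((s:ℂ) * Complex.I) * z‖ ^ 2) /
            ‖w - Complex.exp ((s:ℂ) * Complex.I) * z‖ ^ 2) := by
  set c : ℂ := (starRingEnd ℂ) z * w with hcdef
  have hcabs : ‖c‖ = ‖z‖ := by
    rw [hcdef, norm_mul, Complex.norm_conj, hw, mul_one]
  have hc : ‖c‖ < 1 := by rw [hcabs]; exact hz
  have hcbar : (starRingEnd ℂ) c = z * (starRingEnd ℂ) w := by
    rw [hcdef, map_mul, Complex.conj_conj]
  have hww : w * (starRingEnd ℂ) w = 1 := by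
    rw [Complex.mul_conj, Complex.normSq_eq_norm_sq, hw]
    norm_num
  have hinv : ∀ s : ℝ, Complex.exp ((s:ℂ) * Complex.I) * Complex.exp (-(s:ℂ) * Complex.I) = 1 := by
    intro s
    rw [← Complex.exp_add,
      show (s:ℂ) * Complex.I + -(s:ℂ) * Complex.I = 0 from by ring, Complex.exp_zero]
  -- Step 1: the left-hand integrand
  have hT : ∀ s : ℝ,
      Complex.exp ((s:ℂ) * Complex.I) * z *
          (1 + (starRingEnd ℂ) (Complex.exp ((s:ℂ) * Complex.I) * z) * w) /
        (1 + Complex.exp ((s:ℂ) * Complex.I) * z * (starRingEnd ℂ) w)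
      = z * Complex.exp ((ψ c s : ℂ) * Complex.I) := by
    intro s
    rw [exp_psi hc s,
      show (1:ℂ) + Complex.exp ((s:ℂ) * Complex.I) * z * (starRingEnd ℂ) w
        = 1 + (starRingEnd ℂ) c * Complex.exp ((s:ℂ) * Complex.I) from by rw [hcbar]; ring,
      mul_div_assoc']
    congr 1
    rw [map_mul, hexpconj s, hcdef]
    linear_combination z * (starRingEnd ℂ) z * w * hinv s
  -- Step 2: the right-hand integrand
  have habs1 : ∀ s : ℝ, ‖Complex.exp ((s:ℂ) * Complex.I) * z‖ = ‖c‖ := by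
    intro s
    rw [norm_mul, Complex.norm_exp_ofReal_mul_I, one_mul, hcabs]
  have habs2 : ∀ s : ℝ, ‖w - Complex.exp ((s:ℂ) * Complex.I) * z‖
      = ‖1 - (starRingEnd ℂ) c * Complex.exp ((s:ℂ) * Complex.I)‖ := by
    intro s
    have h : w - Complex.exp ((s:ℂ) * Complex.I) * z
        = w * (1 - (starRingEnd ℂ) c * Complex.exp ((s:ℂ) * Complex.I)) := by
      rw [hcbar]
      linear_combination Complex.exp ((s:ℂ) * Complex.I) * z * hww
    rw [h, norm_mul, hw, one_mul]
  have hRHS : ∀ s : ℝ,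
      g (Complex.exp ((s:ℂ) * Complex.I) * z) *
          ENNReal.ofReal ((1 - ‖Complex.exp ((s:ℂ) * Complex.I) * z‖ ^ 2) /
            ‖w - Complex.exp ((s:ℂ) * Complex.I) * z‖ ^ 2)
        = Ffun g z c s := by
    intro s
    rw [Ffun, habs1 s, habs2 s, mul_comm z (Complex.exp ((s:ℂ) * Complex.I))]
  -- Pointwise Jacobian identity
  have hpoint : ∀ x : ℝ,
      ENNReal.ofReal |(1 - ‖c‖ ^ 2) /
          ‖1 + (starRingEnd ℂ) c * Complex.exp ((x:ℂ) * Complex.I)‖ ^ 2| *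
        Ffun g z c (ψ c x) = g (z * Complex.exp ((ψ c x : ℂ) * Complex.I)) := by
    intro x
    have hK : ‖c‖ ^ 2 < 1 := by
      nlinarith [norm_nonneg c]
    have h1K : (0:ℝ) < 1 - ‖c‖ ^ 2 := by linarith
    have hA0 : 0 < ‖1 + (starRingEnd ℂ) c * Complex.exp ((x:ℂ) * Complex.I)‖ :=
      norm_pos_iff.mpr (exp_nonzero_aux hc x)
    have h4 : (1 - (starRingEnd ℂ) c * Complex.exp ((ψ c x : ℂ) * Complex.I)) *
        (1 + (starRingEnd ℂ) c * Complex.exp ((x:ℂ) * Complex.I))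
        = 1 - (starRingEnd ℂ) c * c := by
      rw [exp_psi hc x]
      field_simp [exp_nonzero_aux hc x]
      ring
    have h5 : ((1 : ℝ) - ‖c‖ ^ 2 : ℝ) = ‖1 - (starRingEnd ℂ) c * c‖ := by
      have h6 : (1 : ℂ) - (starRingEnd ℂ) c * c = (((1 : ℝ) - ‖c‖ ^ 2 : ℝ) : ℂ) := by
        rw [mul_comm, Complex.mul_conj, Complex.normSq_eq_norm_sq]
        push_cast
        ring
      rw [h6, Complex.norm_real, Real.norm_eq_abs, abs_of_pos (by linarith)]
    have hBA : ‖1 - (starRingEnd ℂ) c * Complex.exp ((ψ c x : ℂ) * Complex.I)‖ *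
        ‖1 + (starRingEnd ℂ) c * Complex.exp ((x:ℂ) * Complex.I)‖
        = 1 - ‖c‖ ^ 2 := by
      rw [← norm_mul, h4, ← h5]
    have hB0 : 0 < ‖1 - (starRingEnd ℂ) c *
        Complex.exp ((ψ c x : ℂ) * Complex.I)‖ := by nlinarith
    have hprod : (1 - ‖c‖ ^ 2) /
        ‖1 + (starRingEnd ℂ) c * Complex.exp ((x:ℂ) * Complex.I)‖ ^ 2 *
        ((1 - ‖c‖ ^ 2) /
          ‖1 - (starRingEnd ℂ) c * Complex.exp ((ψ c x : ℂ) * Complex.I)‖ ^ 2)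
        = 1 := by
      rw [div_mul_div_comm,
        show ‖1 + (starRingEnd ℂ) c * Complex.exp ((x:ℂ) * Complex.I)‖ ^ 2 *
            ‖1 - (starRingEnd ℂ) c * Complex.exp ((ψ c x : ℂ) * Complex.I)‖ ^ 2
          = (‖1 - (starRingEnd ℂ) c * Complex.exp ((ψ c x : ℂ) * Complex.I)‖ *
              ‖1 + (starRingEnd ℂ) c * Complex.exp ((x:ℂ) * Complex.I)‖) ^ 2
          from by ring, hBA, ← sq]
      exact div_self (pow_ne_zero 2 h1K.ne')
    have hψpos := psi_deriv_pos hc x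
    rw [Ffun, abs_of_pos hψpos, ← mul_assoc, mul_comm (ENNReal.ofReal _) (g _), mul_assoc,
      ← ENNReal.ofReal_mul (le_of_lt hψpos), hprod, ENNReal.ofReal_one, mul_one]
  -- Chain of equalities
  have hinj : Set.InjOn (ψ c) (Set.Ioc 0 (2 * Real.pi)) := (psi_mono hc).injective.injOn
  have hderiv : ∀ x ∈ Set.Ioc (0:ℝ) (2 * Real.pi),
      HasDerivWithinAt (ψ c)
        ((1 - ‖c‖ ^ 2) /
          ‖1 + (starRingEnd ℂ) c * Complex.exp ((x:ℂ) * Complex.I)‖ ^ 2)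
        (Set.Ioc 0 (2 * Real.pi)) x :=
    fun x _ => (hasDerivAt_psi hc x).hasDerivWithinAt
  have hcov := lintegral_image_eq_lintegral_abs_deriv_mul measurableSet_Ioc hderiv hinj
    (Ffun g z c)
  calc (∫⁻ s in Set.Ioc (0:ℝ) (2 * Real.pi),
        g (Complex.exp ((s:ℂ) * Complex.I) * z *
            (1 + (starRingEnd ℂ) (Complex.exp ((s:ℂ) * Complex.I) * z) * w) /
          (1 + Complex.exp ((s:ℂ) * Complex.I) * z * (starRingEnd ℂ) w)))
      = ∫⁻ s in Set.Ioc (0:ℝ) (2 * Real.pi), g (z * Complex.exp ((ψ c s : ℂ) * Complex.I)) :=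
        lintegral_congr fun s => by rw [hT s]
    _ = ∫⁻ x in Set.Ioc (0:ℝ) (2 * Real.pi),
          ENNReal.ofReal |(1 - ‖c‖ ^ 2) /
            ‖1 + (starRingEnd ℂ) c * Complex.exp ((x:ℂ) * Complex.I)‖ ^ 2| *
          Ffun g z c (ψ c x) := lintegral_congr fun x => (hpoint x).symm
    _ = ∫⁻ t in ψ c '' Set.Ioc (0:ℝ) (2 * Real.pi), Ffun g z c t := hcov.symm
    _ = ∫⁻ t in Set.Ioc (ψ c 0) (ψ c 0 + 2 * Real.pi), Ffun g z c t := by rw [psi_image hc]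
    _ = ∫⁻ t in Set.Ioc (0:ℝ) (2 * Real.pi), Ffun g z c t :=
        lintegral_Ioc_per (Ffun g z c) (Ffun_per g z c) (ψ c 0)
    _ = ∫⁻ s in Set.Ioc (0:ℝ) (2 * Real.pi),
        g (Complex.exp ((s:ℂ) * Complex.I) * z) *
          ENNReal.ofReal ((1 - ‖Complex.exp ((s:ℂ) * Complex.I) * z‖ ^ 2) /
            ‖w - Complex.exp ((s:ℂ) * Complex.I) * z‖ ^ 2) :=
        lintegral_congr fun s => (hRHS s).symm

end RotAux

/-- If `Z` has a rotationally invariant law `Λ` on the open unit disk and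
`|w| = 1`, then `Z(1 + conj(Z) w)/(1 + Z conj(w))` has law `P_𝔻(z, w) Λ(dz)`, where
`P_𝔻(z, w) = (1 − |z|²)/|w − z|²` is the Poisson kernel of the disk. -/
theorem rotation_transform
    (Λ : Measure ℂ) [IsProbabilityMeasure Λ]
    (hdisk : ∀ᵐ z ∂Λ, ‖z‖ < 1)
    (hrot : ∀ t : ℝ, Λ.map (fun z => Complex.exp (t * Complex.I) * z) = Λ)
    (w : ℂ) (hw : ‖w‖ = 1) :
    Λ.map (fun z => z * (1 + (starRingEnd ℂ) z * w) / (1 + z * (starRingEnd ℂ) w)) =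
      Λ.withDensity
        (fun z => ENNReal.ofReal ((1 - ‖z‖ ^ 2) / ‖w - z‖ ^ 2)) := by
  have hπ : (0:ℝ) < 2 * Real.pi := by positivity
  have hTm : Measurable (fun z : ℂ => z * (1 + (starRingEnd ℂ) z * w) / (1 + z * (starRingEnd ℂ) w)) := by
    simp only [div_eq_mul_inv]
    exact (measurable_id.mul
        (measurable_const.add (Complex.continuous_conj.measurable.mul_const w))).mul
      ((measurable_const.add (measurable_id.mul_const _)).inv)
  have hρm : Measurable (fun z : ℂ =>
      ENNReal.ofReal ((1 - ‖z‖ ^ 2) / ‖w - z‖ ^ 2)) := by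
    apply ENNReal.measurable_ofReal.comp
    apply Measurable.div
    · exact measurable_const.sub (continuous_norm.measurable.pow_const 2)
    · exact ((continuous_norm.comp (continuous_const.sub continuous_id)).measurable).pow_const 2
  have key : ∀ g : ℂ → ℝ≥0∞, Measurable g →
      (∫⁻ z, g (z * (1 + (starRingEnd ℂ) z * w) / (1 + z * (starRingEnd ℂ) w)) ∂Λ)
        = ∫⁻ z, g z * ENNReal.ofReal ((1 - ‖z‖ ^ 2) / ‖w - z‖ ^ 2) ∂Λ := by
    intro g hg
    have avg : ∀ G : ℂ → ℝ≥0∞, Measurable G →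
        ENNReal.ofReal (2 * Real.pi) * ∫⁻ z, G z ∂Λ
          = ∫⁻ z, ∫⁻ s in Set.Ioc (0:ℝ) (2 * Real.pi),
              G (Complex.exp ((s:ℂ) * Complex.I) * z) ∂volume ∂Λ := by
      intro G hG
      have hGm : Measurable (fun p : ℝ × ℂ => G (Complex.exp ((p.1:ℂ) * Complex.I) * p.2)) := by
        apply hG.comp
        exact ((Complex.measurable_ofReal.comp measurable_fst).mul_const Complex.I).cexp.mul
          measurable_snd
      have h1 : ∀ s : ℝ, (∫⁻ z, G (Complex.exp ((s:ℂ) * Complex.I) * z) ∂Λ) = ∫⁻ z, G z ∂Λ := by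
        intro s
        conv_rhs => rw [← hrot s]
        rw [lintegral_map hG (measurable_const_mul _)]
      calc ENNReal.ofReal (2 * Real.pi) * ∫⁻ z, G z ∂Λ
          = ∫⁻ s in Set.Ioc (0:ℝ) (2 * Real.pi),
              (∫⁻ z, G (Complex.exp ((s:ℂ) * Complex.I) * z) ∂Λ) ∂volume := by
            rw [lintegral_congr fun s => h1 s, setLIntegral_const, Real.volume_Ioc, sub_zero,
              mul_comm]
        _ = ∫⁻ z, ∫⁻ s in Set.Ioc (0:ℝ) (2 * Real.pi),
              G (Complex.exp ((s:ℂ) * Complex.I) * z) ∂volume ∂Λ :=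
            lintegral_lintegral_swap hGm.aemeasurable
    have e1 := avg (fun u => g (u * (1 + (starRingEnd ℂ) u * w) / (1 + u * (starRingEnd ℂ) w)))
      (hg.comp hTm)
    have e2 := avg (fun u => g u *
        ENNReal.ofReal ((1 - ‖u‖ ^ 2) / ‖w - u‖ ^ 2)) (hg.mul hρm)
    beta_reduce at e1 e2
    have hae : (∫⁻ z, ∫⁻ s in Set.Ioc (0:ℝ) (2 * Real.pi),
          g (Complex.exp ((s:ℂ) * Complex.I) * z *
              (1 + (starRingEnd ℂ) (Complex.exp ((s:ℂ) * Complex.I) * z) * w) /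
            (1 + Complex.exp ((s:ℂ) * Complex.I) * z * (starRingEnd ℂ) w)) ∂volume ∂Λ)
        = ∫⁻ z, ∫⁻ s in Set.Ioc (0:ℝ) (2 * Real.pi),
            g (Complex.exp ((s:ℂ) * Complex.I) * z) *
              ENNReal.ofReal
                ((1 - ‖Complex.exp ((s:ℂ) * Complex.I) * z‖ ^ 2) /
                  ‖w - Complex.exp ((s:ℂ) * Complex.I) * z‖ ^ 2) ∂volume ∂Λ := by
      apply lintegral_congr_ae
      filter_upwards [hdisk] with z hzlt
      exact RotAux.core hzlt hw g
    have e3 := e1.trans (hae.trans e2.symm)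
    have h0 : ENNReal.ofReal (2 * Real.pi) ≠ 0 := (ENNReal.ofReal_pos.mpr hπ).ne'
    have ht : ENNReal.ofReal (2 * Real.pi) ≠ ⊤ := ENNReal.ofReal_ne_top
    have := congrArg (fun x => (ENNReal.ofReal (2 * Real.pi))⁻¹ * x) e3
    beta_reduce at this
    rw [← mul_assoc, ← mul_assoc, ENNReal.inv_mul_cancel h0 ht, one_mul, one_mul] at this
    exact this
  refine Measure.ext fun A hA => ?_
  rw [Measure.map_apply hTm hA, withDensity_apply _ hA]
  have hi := key (A.indicator 1) (measurable_one.indicator hA)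
  calc Λ ((fun z => z * (1 + (starRingEnd ℂ) z * w) / (1 + z * (starRingEnd ℂ) w)) ⁻¹' A)
      = ∫⁻ z, ((fun z => z * (1 + (starRingEnd ℂ) z * w) /
          (1 + z * (starRingEnd ℂ) w)) ⁻¹' A).indicator 1 z ∂Λ :=
        (lintegral_indicator_one (hTm hA)).symm
    _ = ∫⁻ z, A.indicator 1
          (z * (1 + (starRingEnd ℂ) z * w) / (1 + z * (starRingEnd ℂ) w)) ∂Λ :=
        lintegral_congr fun z => by
          by_cases h : z * (1 + (starRingEnd ℂ) z * w) / (1 + z * (starRingEnd ℂ) w) ∈ A <;>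
            simp [Set.indicator_apply, Set.mem_preimage, h]
    _ = ∫⁻ z, A.indicator 1 z *
          ENNReal.ofReal ((1 - ‖z‖ ^ 2) / ‖w - z‖ ^ 2) ∂Λ := hi
    _ = ∫⁻ z in A, ENNReal.ofReal ((1 - ‖z‖ ^ 2) / ‖w - z‖ ^ 2) ∂Λ := by
        rw [← lintegral_indicator hA]
        exact lintegral_congr fun z => by
          by_cases h : z ∈ A <;> simp [Set.indicator_apply, h]
end
end
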